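/- arXiv:0812.2260 — 9 statements merged into one kernel-verified Lean document; each statement's English description precedes it below -/
import Mathlib

section
/- Let φ : ℝ^m → ℝ be a linear functional and let p ≥ 1 be an integer. Then the p-th average componentwise condition number satisfies κ_av^[p](φ) = [(1/√π) · (Γ(m/2)/Γ((m+p)/2)) · Γ((p+1)/2)]^{1/p} · ‖φ‖, where ‖φ‖ is the operator norm of φ. In particular, for p = 2, κ_av(φ) = ‖φ‖/√m. -/
open MeasureTheory Metric



open Set Real MeasureTheory.Measure
open scoped RealInnerProductSpace

lemma gauss_Ioi (n : ℕ) :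
    ∫ x in Ioi (0:ℝ), x ^ n * Real.exp (-x ^ 2) = (1/2) * Real.Gamma ((n + 1) / 2) := by
  have h := integral_rpow_mul_exp_neg_rpow (p := 2) (q := (n : ℝ)) two_pos
    (lt_of_lt_of_le (by norm_num) (Nat.cast_nonneg n))
  rw [← h]
  · refine setIntegral_congr_fun measurableSet_Ioi fun x hx => ?_
    rw [show ((2:ℝ)) = ((2:ℕ):ℝ) by norm_num, Real.rpow_natCast, Real.rpow_natCast]

lemma gauss_abs (n : ℕ) :
    ∫ t : ℝ, |t| ^ n * Real.exp (-t ^ 2) = Real.Gamma ((n + 1) / 2) := by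
  have h : ∫ t : ℝ, |t| ^ n * Real.exp (-t ^ 2)
      = 2 * ∫ t in Ioi (0:ℝ), t ^ n * Real.exp (-t ^ 2) := by
    rw [← integral_comp_abs (f := fun s => s ^ n * Real.exp (-s ^ 2))]
    congr 1; ext t; rw [sq_abs]
  rw [h, gauss_Ioi]; ring

lemma gauss_plain : ∫ t : ℝ, Real.exp (-t ^ 2) = Real.sqrt Real.pi := by
  have := integral_gaussian 1
  simpa using this

lemma gauss_euclid (m : ℕ) (hm : 1 ≤ m) (p : ℕ) (hp : 1 ≤ p)
    (φ : EuclideanSpace ℝ (Fin m) →L[ℝ] ℝ) :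
    ∫ x : EuclideanSpace ℝ (Fin m), |φ x| ^ p * Real.exp (-‖x‖ ^ 2)
      = ‖φ‖ ^ p * Real.Gamma ((p + 1) / 2) * Real.sqrt Real.pi ^ (m - 1) := by
  set v : EuclideanSpace ℝ (Fin m) :=
    (InnerProductSpace.toDual ℝ (EuclideanSpace ℝ (Fin m))).symm φ with hv
  have hφx : ∀ x, φ x = (inner ℝ v x : ℝ) := fun x =>
    (InnerProductSpace.toDual_symm_apply).symm
  have hnv : ‖v‖ = ‖φ‖ := LinearIsometryEquiv.norm_map _ _
  by_cases hv0 : v = 0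
  · have hφ0 : φ = 0 := by
      have h : ‖φ‖ = 0 := by rw [← hnv, hv0, norm_zero]
      simpa using h
    simp [hφ0, zero_pow (by omega : p ≠ 0)]
  · set u : EuclideanSpace ℝ (Fin m) := ‖v‖⁻¹ • v with hu
    set i0 : Fin m := ⟨0, hm⟩ with hi0
    have hunit : Orthonormal ℝ (({i0} : Set (Fin m)).restrict (fun _ => u)) :=
      ⟨fun i => norm_smul_inv_norm hv0, fun i j hij => absurd (Subsingleton.elim i j) hij⟩
    obtain ⟨b, hb⟩ := hunit.exists_orthonormalBasis_extension_of_card_eq (by simp)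
    have hbu : b i0 = u := hb i0 rfl
    have hvu : v = ‖v‖ • b i0 := by rw [hbu, hu, smul_inv_smul₀ (norm_ne_zero_iff.2 hv0)]
    have hkey : ∀ x, φ x = ‖v‖ * b.repr x i0 := fun x => by
      have h : (inner ℝ v x : ℝ) = inner ℝ (‖v‖ • b i0) x := by rw [← hvu]
      rw [hφx, h, real_inner_smul_left, ← OrthonormalBasis.repr_apply_apply]
    calc ∫ x : EuclideanSpace ℝ (Fin m), |φ x| ^ p * Real.exp (-‖x‖ ^ 2)
        = ∫ y : EuclideanSpace ℝ (Fin m), |‖v‖ * y i0| ^ p * Real.exp (-‖y‖ ^ 2) := by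
          rw [← (b.measurePreserving_repr_symm).integral_comp
            b.repr.symm.toHomeomorph.measurableEmbedding
            (fun x => |φ x| ^ p * Real.exp (-‖x‖ ^ 2))]
          refine integral_congr_ae (Filter.Eventually.of_forall fun y => ?_)
          show |φ (b.repr.symm y)| ^ p * Real.exp (-‖b.repr.symm y‖ ^ 2)
              = |‖v‖ * y i0| ^ p * Real.exp (-‖y‖ ^ 2)
          simp only [hkey, LinearIsometryEquiv.apply_symm_apply, LinearIsometryEquiv.norm_map]
      _ = ∫ z : Fin m → ℝ, ∏ i,
            ((if i = i0 then |‖v‖ * z i| ^ p else 1) * Real.exp (-(z i) ^ 2)) := by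
          rw [← ((EuclideanSpace.volume_preserving_symm_measurableEquiv_toLp (Fin m)).symm
              (MeasurableEquiv.toLp 2 (Fin m → ℝ)).symm).integral_comp
            (MeasurableEquiv.toLp 2 (Fin m → ℝ)).symm.symm.measurableEmbedding
            (fun y : EuclideanSpace ℝ (Fin m) => |‖v‖ * y i0| ^ p * Real.exp (-‖y‖ ^ 2))]
          refine integral_congr_ae (Filter.Eventually.of_forall fun z => ?_)
          have h1 : ∀ i, ((MeasurableEquiv.toLp 2 (Fin m → ℝ)).symm.symm z) i = z i :=
            fun i => rfl
          have h2 : ‖(MeasurableEquiv.toLp 2 (Fin m → ℝ)).symm.symm z‖ ^ 2 = ∑ i, (z i) ^ 2 := by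
            rw [EuclideanSpace.norm_eq, Real.sq_sqrt (by positivity)]
            simp [h1, sq_abs]
          show |‖v‖ * ((MeasurableEquiv.toLp 2 (Fin m → ℝ)).symm.symm z) i0| ^ p
              * Real.exp (-‖(MeasurableEquiv.toLp 2 (Fin m → ℝ)).symm.symm z‖ ^ 2)
              = ∏ i, ((if i = i0 then |‖v‖ * z i| ^ p else 1) * Real.exp (-(z i) ^ 2))
          rw [h1, h2, ← Finset.sum_neg_distrib, Real.exp_sum, Finset.prod_mul_distrib,
            Finset.prod_ite_eq' Finset.univ i0 (fun i => |‖v‖ * z i| ^ p)]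
          simp
      _ = ∏ i, ∫ t : ℝ, ((if i = i0 then |‖v‖ * t| ^ p else 1) * Real.exp (-t ^ 2)) :=
          integral_fintype_prod_eq_prod (ι := Fin m)
            (fun i t => (if i = i0 then |‖v‖ * t| ^ p else 1) * Real.exp (-t ^ 2))
      _ = ‖φ‖ ^ p * Real.Gamma ((p + 1) / 2) * Real.sqrt Real.pi ^ (m - 1) := by
          rw [← Finset.mul_prod_erase Finset.univ _ (Finset.mem_univ i0)]
          have h3 : ∫ t : ℝ, ((if i0 = i0 then |‖v‖ * t| ^ p else 1) * Real.exp (-t ^ 2))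
              = ‖φ‖ ^ p * Real.Gamma ((p + 1) / 2) := by
            simp only [eq_self_iff_true, if_true]
            have h : ∀ t : ℝ, |‖v‖ * t| ^ p * Real.exp (-t ^ 2)
                = ‖φ‖ ^ p * (|t| ^ p * Real.exp (-t ^ 2)) := fun t => by
              rw [abs_mul, abs_of_nonneg (norm_nonneg v), mul_pow, hnv]; ring
            simp_rw [h]
            rw [integral_const_mul, gauss_abs]
          have h4 : ∀ i ∈ Finset.univ.erase i0,
              (∫ t : ℝ, ((if i = i0 then |‖v‖ * t| ^ p else 1) * Real.exp (-t ^ 2)))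
              = Real.sqrt Real.pi := fun i hi => by
            simp only [if_neg (Finset.ne_of_mem_erase hi), one_mul]
            exact gauss_plain
          rw [h3, Finset.prod_congr rfl h4, Finset.prod_const,
            Finset.card_erase_of_mem (Finset.mem_univ i0), Finset.card_univ, Fintype.card_fin]

lemma sphere_decomp (m p : ℕ) (hm : 1 ≤ m)
    (φ : EuclideanSpace ℝ (Fin m) →L[ℝ] ℝ) :
    ∫ x : EuclideanSpace ℝ (Fin m), |φ x| ^ p * Real.exp (-‖x‖ ^ 2)
      = (∫ ω : sphere (0 : EuclideanSpace ℝ (Fin m)) 1, |φ ω| ^ p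
          ∂(volume : Measure (EuclideanSpace ℝ (Fin m))).toSphere)
        * ∫ r in Ioi (0:ℝ), r ^ (m - 1 + p) * Real.exp (-r ^ 2) := by
  haveI : Nontrivial (EuclideanSpace ℝ (Fin m)) := by
    refine Module.nontrivial_of_finrank_pos (R := ℝ) ?_
    rw [finrank_euclideanSpace_fin]; omega
  set μ : Measure (EuclideanSpace ℝ (Fin m)) := volume with hμ
  have hdim : Module.finrank ℝ (EuclideanSpace ℝ (Fin m)) = m := finrank_euclideanSpace_fin
  have h := (μ.measurePreserving_homeomorphUnitSphereProd).integral_comp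
      (Homeomorph.measurableEmbedding _)
      (fun z : sphere (0 : EuclideanSpace ℝ (Fin m)) 1 × Ioi (0:ℝ) =>
        |φ z.1| ^ p * ((z.2 : ℝ) ^ p * Real.exp (-(z.2 : ℝ) ^ 2)))
  rw [hdim] at h
  calc ∫ x : EuclideanSpace ℝ (Fin m), |φ x| ^ p * Real.exp (-‖x‖ ^ 2) ∂μ
      = ∫ x : ({0}ᶜ : Set (EuclideanSpace ℝ (Fin m))),
          |φ x.1| ^ p * Real.exp (-‖x.1‖ ^ 2) ∂(μ.comap (↑)) := by
        rw [integral_subtype_comap (measurableSet_singleton _).compl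
          (fun x => |φ x| ^ p * Real.exp (-‖x‖ ^ 2)), restrict_compl_singleton]
    _ = ∫ z : sphere (0 : EuclideanSpace ℝ (Fin m)) 1 × Ioi (0:ℝ),
          |φ z.1| ^ p * ((z.2 : ℝ) ^ p * Real.exp (-(z.2 : ℝ) ^ 2))
          ∂(μ.toSphere.prod (volumeIoiPow (m - 1))) := by
        rw [← h]
        refine integral_congr_ae (Filter.Eventually.of_forall fun x => ?_)
        have hx : (x : EuclideanSpace ℝ (Fin m)) ≠ 0 := x.2
        have hnx : ‖(x : EuclideanSpace ℝ (Fin m))‖ ≠ 0 := norm_ne_zero_iff.2 hx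
        simp only [homeomorphUnitSphereProd_apply_fst_coe, homeomorphUnitSphereProd_apply_snd_coe,
          one_smul, div_one]
        rw [φ.map_smul, smul_eq_mul, abs_mul, abs_inv, abs_norm, mul_pow, inv_pow]
        field_simp
    _ = (∫ ω : sphere (0 : EuclideanSpace ℝ (Fin m)) 1, |φ ω| ^ p ∂μ.toSphere)
        * ∫ r : Ioi (0:ℝ), ((r : ℝ) ^ p * Real.exp (-(r : ℝ) ^ 2)) ∂(volumeIoiPow (m - 1)) :=
        integral_prod_mul (fun ω : sphere (0 : EuclideanSpace ℝ (Fin m)) 1 => |φ ω| ^ p)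
          (fun r : Ioi (0:ℝ) => (r : ℝ) ^ p * Real.exp (-(r : ℝ) ^ 2))
    _ = _ := by
        congr 1
        rw [volumeIoiPow]
        simp only [ENNReal.ofReal]
        rw [integral_withDensity_eq_integral_smul
          ((measurable_subtype_coe.pow_const _).real_toNNReal),
          integral_subtype_comap measurableSet_Ioi
            (fun a : ℝ => Real.toNNReal (a ^ (m - 1)) • (a ^ p * Real.exp (-a ^ 2)))]
        refine setIntegral_congr_fun measurableSet_Ioi fun r hr => ?_
        rw [NNReal.smul_def, Real.coe_toNNReal _ (pow_nonneg hr.out.le _), smul_eq_mul, pow_add]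
        ring

lemma vol_sphere (m : ℕ) (hm : 1 ≤ m) :
    (((volume : Measure (EuclideanSpace ℝ (Fin m))).toSphere Set.univ)).toReal
      = m * (Real.sqrt Real.pi ^ m / Real.Gamma (m / 2 + 1)) := by
  haveI : Nonempty (Fin m) := ⟨⟨0, hm⟩⟩
  haveI : Nontrivial (EuclideanSpace ℝ (Fin m)) := by
    refine Module.nontrivial_of_finrank_pos (R := ℝ) ?_
    rw [finrank_euclideanSpace_fin]; omega
  rw [Measure.toSphere_apply_univ, EuclideanSpace.volume_ball, finrank_euclideanSpace_fin]
  simp only [Fintype.card_fin, ENNReal.ofReal_one, one_pow, one_mul]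
  rw [ENNReal.toReal_mul, ENNReal.toReal_natCast,
    ENNReal.toReal_ofReal (by positivity)]

lemma avg_eq (m : ℕ) (hm : 1 ≤ m) (φ : EuclideanSpace ℝ (Fin m) →L[ℝ] ℝ)
    (p : ℕ) (hp : 1 ≤ p) :
    (1 / ((volume : Measure (EuclideanSpace ℝ (Fin m))).toSphere Set.univ).toReal) *
        (∫ x : sphere (0 : EuclideanSpace ℝ (Fin m)) 1, |φ x| ^ p
          ∂(volume : Measure (EuclideanSpace ℝ (Fin m))).toSphere)
      = ((1 / Real.sqrt Real.pi) * (Real.Gamma (m / 2) / Real.Gamma ((m + p) / 2)) *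
          Real.Gamma ((p + 1) / 2)) * ‖φ‖ ^ p := by
  have hπ : (0:ℝ) < Real.sqrt Real.pi := Real.sqrt_pos.2 Real.pi_pos
  have hm0 : (0:ℝ) < m := by exact_mod_cast hm
  have hΓm : 0 < Real.Gamma (m / 2) := Real.Gamma_pos_of_pos (by positivity)
  have hA : 0 < Real.Gamma ((m + p) / 2) := Real.Gamma_pos_of_pos (by positivity)
  have hJ : ∫ r in Ioi (0:ℝ), r ^ (m - 1 + p) * Real.exp (-r ^ 2)
      = (1/2) * Real.Gamma ((m + p) / 2) := by
    rw [gauss_Ioi]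
    have h1 : m - 1 + p + 1 = m + p := by omega
    have h2 : ((m - 1 + p : ℕ) : ℝ) + 1 = (m : ℝ) + p := by exact_mod_cast h1
    rw [h2]
  have hIJ := (sphere_decomp m p hm φ).symm.trans (gauss_euclid m hm p hp φ)
  rw [hJ] at hIJ
  set I := ∫ x : sphere (0 : EuclideanSpace ℝ (Fin m)) 1, |φ x| ^ p
          ∂(volume : Measure (EuclideanSpace ℝ (Fin m))).toSphere with hI
  rw [vol_sphere m hm, Real.Gamma_add_one (by positivity : (m:ℝ)/2 ≠ 0)]
  have hpow : Real.sqrt Real.pi ^ m = Real.sqrt Real.pi ^ (m - 1) * Real.sqrt Real.pi := by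
    rw [← pow_succ]; congr 1; omega
  have hIv : I = ‖φ‖ ^ p * Real.Gamma ((p + 1)/2) * Real.sqrt Real.pi ^ (m-1) * 2
      / Real.Gamma ((m + p) / 2) := by
    field_simp at hIJ ⊢
    linarith
  rw [hIv, hpow]
  have hπp : Real.sqrt Real.pi ^ (m - 1) ≠ 0 := by positivity
  field_simp

/-- **Average componentwise condition number of a linear functional.**
For a linear functional `φ : ℝ^m → ℝ` and an integer `p ≥ 1`,
`κ_av^[p](φ) = [(1/√π) · (Γ(m/2)/Γ((m+p)/2)) · Γ((p+1)/2)]^{1/p} · ‖φ‖`,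
where `κ_av^[p](φ)` is the `p`-th moment average of `|φ x|` over the unit sphere
`S^{m-1}` and `‖φ‖` is the operator norm of `φ`.  In particular, for `p = 2`,
`κ_av(φ) = ‖φ‖ / √m`. -/
theorem stmt_5 (m : ℕ) (hm : 1 ≤ m)
    (φ : EuclideanSpace ℝ (Fin m) →L[ℝ] ℝ) (p : ℕ) (hp : 1 ≤ p) :
    ((1 / ((volume : Measure (EuclideanSpace ℝ (Fin m))).toSphere Set.univ).toReal) *
        (∫ x : sphere (0 : EuclideanSpace ℝ (Fin m)) 1, |φ x| ^ p
          ∂(volume : Measure (EuclideanSpace ℝ (Fin m))).toSphere)) ^ ((1 : ℝ) / p)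
      = ((1 / Real.sqrt Real.pi) * (Real.Gamma (m / 2) / Real.Gamma ((m + p) / 2)) *
          Real.Gamma ((p + 1) / 2)) ^ ((1 : ℝ) / p) * ‖φ‖ ∧
      Real.sqrt ((1 / ((volume : Measure (EuclideanSpace ℝ (Fin m))).toSphere Set.univ).toReal) *
        (∫ x : sphere (0 : EuclideanSpace ℝ (Fin m)) 1, |φ x| ^ 2
          ∂(volume : Measure (EuclideanSpace ℝ (Fin m))).toSphere))
        = ‖φ‖ / Real.sqrt m := by
  have hπ : (0:ℝ) < Real.sqrt Real.pi := Real.sqrt_pos.2 Real.pi_pos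
  have hm0 : (0:ℝ) < m := by exact_mod_cast hm
  have hΓm : 0 < Real.Gamma (m / 2) := Real.Gamma_pos_of_pos (by positivity)
  constructor
  · rw [avg_eq m hm φ p hp]
    have hA : 0 < Real.Gamma ((m + p) / 2) := Real.Gamma_pos_of_pos (by positivity)
    have hΓp : 0 < Real.Gamma ((p + 1) / 2) := Real.Gamma_pos_of_pos (by positivity)
    have hC : (0:ℝ) ≤ (1 / Real.sqrt Real.pi) *
        (Real.Gamma (m / 2) / Real.Gamma ((m + p) / 2)) * Real.Gamma ((p + 1) / 2) := by
      positivity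
    rw [Real.mul_rpow hC (by positivity), ← Real.rpow_natCast ‖φ‖ p,
      ← Real.rpow_mul (norm_nonneg _)]
    rw [mul_one_div, div_self (Nat.cast_ne_zero.mpr (by omega) : (p:ℝ) ≠ 0),
      Real.rpow_one]
  · rw [avg_eq m hm φ 2 (by norm_num)]
    have hC2 : ((1 / Real.sqrt Real.pi) *
        (Real.Gamma (m / 2) / Real.Gamma ((m + 2) / 2)) * Real.Gamma ((2 + 1) / 2))
        = 1 / m := by
      rw [show ((m:ℝ) + 2) / 2 = m / 2 + 1 by ring,
        Real.Gamma_add_one (by positivity : (m:ℝ)/2 ≠ 0),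
        show ((2:ℝ) + 1) / 2 = 1/2 + 1 by ring,
        Real.Gamma_add_one (by norm_num : (1:ℝ)/2 ≠ 0), Real.Gamma_one_half_eq]
      field_simp
    rw [show ((2:ℕ):ℝ) = (2:ℝ) by norm_num] at *
    rw [hC2]
    rw [show (1/(m:ℝ)) * ‖φ‖ ^ 2 = ‖φ‖ ^ 2 / m by ring,
      Real.sqrt_div (by positivity) , Real.sqrt_sq (norm_nonneg _)]
end

section
/- Let A be an invertible n×n real matrix and y ∈ ℝ^n. Consider the linear map DG : M_n(ℝ) → ℝ^n given by DG(Ȧ) = −A^{-1} Ȧ y, where M_n(ℝ) carries the Frobenius inner product and ℝ^n the Euclidean inner product. Then the operator norm of DG equals ‖A^{-1}‖ · ‖y‖, where ‖A^{-1}‖ is the operator (spectral) norm of A^{-1} and ‖y‖ is the Euclidean norm of y. -/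
open MeasureTheory Matrix

lemma frob_bound {n : ℕ} (M : Matrix (Fin n) (Fin n) ℝ) (v : EuclideanSpace ℝ (Fin n)) :
    ‖Matrix.toEuclideanLin M v‖ ≤ Real.sqrt (∑ i, ∑ j, M i j ^ 2) * ‖v‖ := by
  have hv : ∑ j, (v j) ^ 2 = ‖v‖ ^ 2 := by
    rw [EuclideanSpace.norm_eq, Real.sq_sqrt (by positivity)]
    simp [sq_abs]
  have happ : ∀ i, (Matrix.toEuclideanLin M v : EuclideanSpace ℝ (Fin n)) i
      = ∑ j, M i j * v j := fun i => rfl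
  rw [EuclideanSpace.norm_eq]
  have key : ∑ i, ‖(Matrix.toEuclideanLin M v : EuclideanSpace ℝ (Fin n)) i‖ ^ 2
      ≤ (∑ i, ∑ j, M i j ^ 2) * ‖v‖ ^ 2 := by
    rw [Finset.sum_mul]
    refine Finset.sum_le_sum fun i _ => ?_
    rw [happ, Real.norm_eq_abs, sq_abs, ← hv]
    exact Finset.sum_mul_sq_le_sq_mul_sq _ _ _
  calc Real.sqrt (∑ i, ‖(Matrix.toEuclideanLin M v : EuclideanSpace ℝ (Fin n)) i‖ ^ 2)
      ≤ Real.sqrt ((∑ i, ∑ j, M i j ^ 2) * ‖v‖ ^ 2) := Real.sqrt_le_sqrt key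
    _ = Real.sqrt (∑ i, ∑ j, M i j ^ 2) * ‖v‖ := by
        rw [Real.sqrt_mul (by positivity), Real.sqrt_sq (norm_nonneg _)]

lemma exists_unit_max {n : ℕ} (hn : 1 ≤ n)
    (F : EuclideanSpace ℝ (Fin n) →L[ℝ] EuclideanSpace ℝ (Fin n)) :
    ∃ u : EuclideanSpace ℝ (Fin n), ‖u‖ = 1 ∧ ‖F u‖ = ‖F‖ := by
  haveI : Nonempty (Fin n) := ⟨⟨0, hn⟩⟩
  obtain ⟨x0, hx0⟩ := exists_norm_eq (EuclideanSpace ℝ (Fin n)) zero_le_one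
  have hsne : (Metric.sphere (0 : EuclideanSpace ℝ (Fin n)) 1).Nonempty :=
    ⟨x0, by simp [hx0]⟩
  obtain ⟨u, hu, hmax⟩ := (isCompact_sphere (0 : EuclideanSpace ℝ (Fin n)) 1).exists_isMaxOn
    hsne ((continuous_norm.comp F.continuous).continuousOn)
  have hu1 : ‖u‖ = 1 := by simpa using mem_sphere_zero_iff_norm.mp hu
  refine ⟨u, hu1, le_antisymm (F.unit_le_opNorm u hu1.le) ?_⟩
  refine F.opNorm_le_bound (norm_nonneg _) fun x => ?_
  rcases eq_or_ne x 0 with rfl | hx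
  · simp
  · have h1 : ‖(‖x‖⁻¹ : ℝ) • x‖ = 1 := norm_smul_inv_norm hx
    have hmem : (‖x‖⁻¹ : ℝ) • x ∈ Metric.sphere (0 : EuclideanSpace ℝ (Fin n)) 1 :=
      mem_sphere_zero_iff_norm.mpr h1
    have h2 : ‖F ((‖x‖⁻¹ : ℝ) • x)‖ ≤ ‖F u‖ := hmax hmem
    rw [ContinuousLinearMap.map_smul, norm_smul, Real.norm_eq_abs, abs_inv, abs_norm] at h2
    have hxpos : (0:ℝ) < ‖x‖ := norm_pos_iff.mpr hx
    calc ‖F x‖ = ‖x‖ * (‖x‖⁻¹ * ‖F x‖) := by field_simp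
    _ ≤ ‖x‖ * ‖F u‖ := mul_le_mul_of_nonneg_left h2 hxpos.le
    _ = ‖F u‖ * ‖x‖ := mul_comm _ _

/-- **Condition number of linear system solving (fixed right-hand side).**
Let `A` be an invertible `n×n` real matrix and `y ∈ ℝ^n`.  The operator norm of
the condition matrix `DG(Ȧ) = -A⁻¹ Ȧ y` on `M_n(ℝ)` with the Frobenius inner
product — i.e. the maximum of `‖DG(Ȧ)‖` over matrices `Ȧ` of Frobenius norm 1 —
equals `‖A⁻¹‖ · ‖y‖`, where `‖A⁻¹‖` is the spectral (operator) norm of `A⁻¹`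
and `‖y‖` the Euclidean norm of `y`. -/
theorem stmt_7 (n : ℕ) (hn : 1 ≤ n) (A : Matrix (Fin n) (Fin n) ℝ)
    (hA : IsUnit A.det) (y : EuclideanSpace ℝ (Fin n)) :
    IsGreatest
      {c : ℝ | ∃ dA : Matrix (Fin n) (Fin n) ℝ,
        Real.sqrt (∑ i, ∑ j, dA i j ^ 2) = 1 ∧
        c = ‖Matrix.toEuclideanLin (-(A⁻¹ * dA)) y‖}
      (‖LinearMap.toContinuousLinearMap (Matrix.toEuclideanLin A⁻¹)‖ * ‖y‖) := by
  set F := LinearMap.toContinuousLinearMap (Matrix.toEuclideanLin A⁻¹) with hF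
  have hFapp : ∀ x, F x = Matrix.toEuclideanLin A⁻¹ x := fun x => rfl
  have hcomp : ∀ (dA : Matrix (Fin n) (Fin n) ℝ),
      Matrix.toEuclideanLin (-(A⁻¹ * dA)) y
        = -(F (Matrix.toEuclideanLin dA y)) := by
    intro dA
    rw [map_neg, LinearMap.neg_apply]
    congr 1
    rw [hFapp, Matrix.toEuclideanLin_apply, Matrix.toEuclideanLin_apply,
      Matrix.toEuclideanLin_apply, WithLp.ofLp_toLp, Matrix.mulVec_mulVec]
  constructor
  · by_cases hy : y = 0
    · refine ⟨Matrix.of fun i j => (if i = (⟨0, hn⟩ : Fin n) then (1:ℝ) else 0) *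
        (if j = (⟨0, hn⟩ : Fin n) then (1:ℝ) else 0), ?_, ?_⟩
      · have : (∑ i, ∑ j, ((if i = (⟨0, hn⟩ : Fin n) then (1:ℝ) else 0) *
            (if j = (⟨0, hn⟩ : Fin n) then (1:ℝ) else 0)) ^ 2) = 1 := by
          simp [mul_pow, ite_pow, ← Finset.sum_mul, Finset.sum_ite_eq']
        rw [show (∑ i, ∑ j, (Matrix.of fun i j => (if i = (⟨0, hn⟩ : Fin n) then (1:ℝ) else 0) *
            (if j = (⟨0, hn⟩ : Fin n) then (1:ℝ) else 0)) i j ^ 2) = 1 from this]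
        exact Real.sqrt_one
      · simp only [hy, map_zero, norm_zero, mul_zero]
    · obtain ⟨u, hu1, huF⟩ := exists_unit_max hn F
      have hy0 : ‖y‖ ≠ 0 := norm_ne_zero_iff.mpr hy
      have hy2 : ∑ j, (y j) ^ 2 = ‖y‖ ^ 2 := by
        rw [EuclideanSpace.norm_eq, Real.sq_sqrt (by positivity)]
        simp [sq_abs]
      have hu2 : ∑ i, (u i) ^ 2 = 1 := by
        have h := hu1
        rw [EuclideanSpace.norm_eq] at h
        have := congrArg (· ^ 2) h
        simp only [Real.sq_sqrt (by positivity : (0:ℝ) ≤ ∑ i, ‖u i‖ ^ 2), one_pow] at this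
        simpa [sq_abs] using this
      refine ⟨Matrix.of fun i j => u i * (y j / ‖y‖), ?_, ?_⟩
      · have : (∑ i, ∑ j, (u i * (y j / ‖y‖)) ^ 2) = 1 := by
          have : ∀ i, ∑ j, (u i * (y j / ‖y‖)) ^ 2
              = (u i) ^ 2 * ((∑ j, (y j) ^ 2) / ‖y‖ ^ 2) := by
            intro i
            rw [Finset.sum_div, Finset.mul_sum]
            exact Finset.sum_congr rfl fun j _ => by ring
          rw [Finset.sum_congr rfl fun i _ => this i, ← Finset.sum_mul, hu2, hy2]
          field_simp
        rw [show (∑ i, ∑ j, (Matrix.of fun i j => u i * (y j / ‖y‖)) i j ^ 2) = 1 from this]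
        exact Real.sqrt_one
      · have hdAy : Matrix.toEuclideanLin (Matrix.of fun i j => u i * (y j / ‖y‖)) y
            = ‖y‖ • u := by
          ext i
          show ∑ j, (u i * (y j / ‖y‖)) * y j = ‖y‖ * u i
          have : ∀ j, (u i * (y j / ‖y‖)) * y j = u i / ‖y‖ * (y j) ^ 2 := fun j => by ring
          rw [Finset.sum_congr rfl fun j _ => this j, ← Finset.mul_sum, hy2]
          field_simp
        rw [hcomp, norm_neg, hdAy, ContinuousLinearMap.map_smul, norm_smul,
          Real.norm_eq_abs, abs_norm, huF, mul_comm]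
  · rintro c ⟨dA, hfrob, rfl⟩
    rw [hcomp, norm_neg]
    calc ‖F (Matrix.toEuclideanLin dA y)‖ ≤ ‖F‖ * ‖Matrix.toEuclideanLin dA y‖ :=
        F.le_opNorm _
    _ ≤ ‖F‖ * (Real.sqrt (∑ i, ∑ j, dA i j ^ 2) * ‖y‖) :=
        mul_le_mul_of_nonneg_left (frob_bound dA y) (norm_nonneg _)
    _ = ‖F‖ * ‖y‖ := by rw [hfrob, one_mul]
end

section
/- Let A be an invertible n×n real matrix and y ∈ ℝ^n. Consider the linear map DG : M_n(ℝ) → ℝ^n given by DG(Ȧ) = −A^{-1} Ȧ y. Then the Frobenius (Hilbert–Schmidt) norm of DG equals ‖A^{-1}‖_F · ‖y‖, and consequently the average condition number is κ_av = ‖A^{-1}‖_F · ‖y‖ / n, which is at most (1/√n) times the operator norm ‖A^{-1}‖·‖y‖ of DG. -/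
open MeasureTheory Matrix Metric

open scoped Pointwise

noncomputable section AuxCond

namespace AuxCond

variable {ι : Type*} [Fintype ι]

/-- The map induced on the unit sphere by a linear isometry equivalence. -/
def sMap (e : EuclideanSpace ℝ ι ≃ₗᵢ[ℝ] EuclideanSpace ℝ ι)
    (u : sphere (0 : EuclideanSpace ℝ ι) 1) : sphere (0 : EuclideanSpace ℝ ι) 1 :=
  ⟨e u, by
    have hu := mem_sphere_zero_iff_norm.mp u.2
    simp [mem_sphere_zero_iff_norm, e.norm_map, hu]⟩

lemma continuous_sMap (e : EuclideanSpace ℝ ι ≃ₗᵢ[ℝ] EuclideanSpace ℝ ι) :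
    Continuous (sMap e) :=
  Continuous.subtype_mk (e.continuous.comp continuous_subtype_val) _

lemma volume_preimage (e : EuclideanSpace ℝ ι ≃ₗᵢ[ℝ] EuclideanSpace ℝ ι)
    (X : Set (EuclideanSpace ℝ ι)) :
    (volume : Measure (EuclideanSpace ℝ ι)) (⇑e ⁻¹' X) = volume X := by
  have hmap : Measure.map e.toHomeomorph.toMeasurableEquiv (volume : Measure (EuclideanSpace ℝ ι)) = volume := by
    have h := e.measurePreserving.map_eq
    exact h
  calc (volume : Measure (EuclideanSpace ℝ ι)) (⇑e ⁻¹' X)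
      = Measure.map e.toHomeomorph.toMeasurableEquiv (volume : Measure (EuclideanSpace ℝ ι)) X :=
        (e.toHomeomorph.toMeasurableEquiv.map_apply X).symm
    _ = volume X := by rw [hmap]

lemma sMap_measurePreserving (e : EuclideanSpace ℝ ι ≃ₗᵢ[ℝ] EuclideanSpace ℝ ι) :
    MeasurePreserving (sMap e)
      (volume : Measure (EuclideanSpace ℝ ι)).toSphere
      (volume : Measure (EuclideanSpace ℝ ι)).toSphere := by
  refine ⟨(continuous_sMap e).measurable, ?_⟩
  refine Measure.ext fun s hs => ?_
  rw [Measure.map_apply (continuous_sMap e).measurable hs]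
  have hpre : MeasurableSet (sMap e ⁻¹' s) := (continuous_sMap e).measurable hs
  rw [Measure.toSphere_apply' _ hpre, Measure.toSphere_apply' _ hs]
  congr 1
  have h1 : Subtype.val '' (sMap e ⁻¹' s) = ⇑e ⁻¹' (Subtype.val '' s) := by
    ext x
    simp only [Set.mem_image, Set.mem_preimage]
    constructor
    · rintro ⟨u, hu, rfl⟩
      exact ⟨sMap e u, hu, rfl⟩
    · rintro ⟨v, hv, hvx⟩
      have hx : x ∈ sphere (0 : EuclideanSpace ℝ ι) 1 := by
        have h1 : ‖e x‖ = 1 := by rw [← hvx]; exact mem_sphere_zero_iff_norm.mp v.2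
        rw [mem_sphere_zero_iff_norm, ← e.norm_map]; exact h1
      refine ⟨⟨x, hx⟩, ?_, rfl⟩
      have : sMap e ⟨x, hx⟩ = v := Subtype.ext (by simp [sMap, hvx])
      rw [this]; exact hv
  rw [h1]
  have h2 : Set.Ioo (0:ℝ) 1 • (⇑e ⁻¹' (Subtype.val '' s))
      = ⇑e ⁻¹' (Set.Ioo (0:ℝ) 1 • (Subtype.val '' s)) := by
    ext z
    constructor
    · rintro ⟨r, hr, w, hw, rfl⟩
      exact ⟨r, hr, e w, hw, (e.map_smul r w).symm⟩
    · rintro ⟨r, hr, w, hw, hz⟩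
      refine ⟨r, hr, e.symm w, Set.mem_preimage.mpr (by rw [e.apply_symm_apply]; exact hw), ?_⟩
      have : r • w = e z := hz
      calc r • e.symm w = e.symm (r • w) := (e.symm.map_smul r w).symm
        _ = z := by rw [this, e.symm_apply_apply]
  rw [h2, volume_preimage]

/-- The sphere map as a measurable equivalence. -/
def sEquiv (e : EuclideanSpace ℝ ι ≃ₗᵢ[ℝ] EuclideanSpace ℝ ι) :
    sphere (0 : EuclideanSpace ℝ ι) 1 ≃ᵐ sphere (0 : EuclideanSpace ℝ ι) 1 where
  toFun := sMap e
  invFun := sMap e.symm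
  left_inv u := Subtype.ext (by simp [sMap])
  right_inv u := Subtype.ext (by simp [sMap])
  measurable_toFun := (continuous_sMap e).measurable
  measurable_invFun := (continuous_sMap e.symm).measurable

lemma integral_comp_sMap (e : EuclideanSpace ℝ ι ≃ₗᵢ[ℝ] EuclideanSpace ℝ ι)
    (f : sphere (0 : EuclideanSpace ℝ ι) 1 → ℝ) :
    ∫ u, f (sMap e u) ∂(volume : Measure (EuclideanSpace ℝ ι)).toSphere
      = ∫ u, f u ∂(volume : Measure (EuclideanSpace ℝ ι)).toSphere :=
  (sMap_measurePreserving e).integral_comp (sEquiv e).measurableEmbedding f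

lemma integrable_continuous (f : sphere (0 : EuclideanSpace ℝ ι) 1 → ℝ) (hf : Continuous f) :
    Integrable f (volume : Measure (EuclideanSpace ℝ ι)).toSphere :=
  hf.integrable_of_hasCompactSupport
    (IsCompact.of_isClosed_subset isCompact_univ (isClosed_tsupport f) (Set.subset_univ _))

lemma continuous_coord (p : ι) :
    Continuous fun u : sphere (0 : EuclideanSpace ℝ ι) 1 => (u : EuclideanSpace ℝ ι) p :=
  (EuclideanSpace.proj (𝕜 := ℝ) p).continuous.comp continuous_subtype_val

/-- Negating one coordinate is a linear isometry equivalence. -/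
def negAt [DecidableEq ι] (p : ι) : EuclideanSpace ℝ ι ≃ₗᵢ[ℝ] EuclideanSpace ℝ ι where
  toLinearEquiv :=
  { toFun := fun x => WithLp.toLp 2 (fun i => if i = p then -x i else x i)
    invFun := fun x => WithLp.toLp 2 (fun i => if i = p then -x i else x i)
    map_add' := by intro x y; ext i; by_cases h : i = p <;> simp [h] <;> ring
    map_smul' := by intro c x; ext i; by_cases h : i = p <;> simp [h] <;> ring
    left_inv := by intro x; ext i; by_cases h : i = p <;> simp [h]
    right_inv := by intro x; ext i; by_cases h : i = p <;> simp [h] }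
  norm_map' := by
    intro x
    rw [EuclideanSpace.norm_eq, EuclideanSpace.norm_eq]
    congr 1
    refine Finset.sum_congr rfl fun i _ => ?_
    by_cases h : i = p <;> simp [h]

@[simp] lemma negAt_apply [DecidableEq ι] (p : ι) (x : EuclideanSpace ℝ ι) (i : ι) :
    negAt p x i = if i = p then -x i else x i := rfl


variable [Nonempty ι]

lemma sum_coord_sq (u : sphere (0 : EuclideanSpace ℝ ι) 1) :
    ∑ p, ((u : EuclideanSpace ℝ ι) p)^2 = 1 := by
  have h := mem_sphere_zero_iff_norm.mp u.2
  have h2 : ‖(u : EuclideanSpace ℝ ι)‖^2 = 1 := by rw [h]; norm_num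
  rw [EuclideanSpace.norm_eq, Real.sq_sqrt (by positivity)] at h2
  simpa [Real.norm_eq_abs, sq_abs] using h2

lemma integral_coord_mul [DecidableEq ι] (p q : ι) :
    (∫ u : sphere (0 : EuclideanSpace ℝ ι) 1,
      (u : EuclideanSpace ℝ ι) p * (u : EuclideanSpace ℝ ι) q
      ∂(volume : Measure (EuclideanSpace ℝ ι)).toSphere)
    = if p = q then
        (((volume : Measure (EuclideanSpace ℝ ι)).toSphere Set.univ).toReal) / Fintype.card ι
      else 0 := by
  by_cases hpq : p = q
  · subst hpq
    rw [if_pos rfl]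
    have key : ∀ r s : ι,
        (∫ u : sphere (0 : EuclideanSpace ℝ ι) 1,
          (u : EuclideanSpace ℝ ι) r * (u : EuclideanSpace ℝ ι) r
          ∂(volume : Measure (EuclideanSpace ℝ ι)).toSphere)
        = ∫ u : sphere (0 : EuclideanSpace ℝ ι) 1,
          (u : EuclideanSpace ℝ ι) s * (u : EuclideanSpace ℝ ι) s
          ∂(volume : Measure (EuclideanSpace ℝ ι)).toSphere := by
      intro r s
      have h := integral_comp_sMap
        (LinearIsometryEquiv.piLpCongrLeft 2 ℝ ℝ (Equiv.swap r s))
        (fun u : sphere (0 : EuclideanSpace ℝ ι) 1 =>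
          (u : EuclideanSpace ℝ ι) r * (u : EuclideanSpace ℝ ι) r)
      have hco : ∀ u : sphere (0 : EuclideanSpace ℝ ι) 1,
          ((sMap (LinearIsometryEquiv.piLpCongrLeft 2 ℝ ℝ (Equiv.swap r s)) u :
              EuclideanSpace ℝ ι) r)
          = (u : EuclideanSpace ℝ ι) s := by
        intro u
        show (LinearIsometryEquiv.piLpCongrLeft 2 ℝ ℝ (Equiv.swap r s)
            (u : EuclideanSpace ℝ ι)) r = _
        rw [LinearIsometryEquiv.piLpCongrLeft_apply]
        simp only [Equiv.piCongrLeft'_apply, Equiv.symm_swap]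
        rw [Equiv.swap_apply_left]
      rw [← h]
      exact integral_congr_ae (Filter.Eventually.of_forall fun u => by simp only [hco])
    have hsum : (∑ r : ι, ∫ u : sphere (0 : EuclideanSpace ℝ ι) 1,
          (u : EuclideanSpace ℝ ι) r * (u : EuclideanSpace ℝ ι) r
          ∂(volume : Measure (EuclideanSpace ℝ ι)).toSphere)
        = (((volume : Measure (EuclideanSpace ℝ ι)).toSphere Set.univ).toReal) := by
      rw [← integral_finset_sum _ (fun r _ => integrable_continuous
        (fun u : sphere (0 : EuclideanSpace ℝ ι) 1 =>
          (u : EuclideanSpace ℝ ι) r * (u : EuclideanSpace ℝ ι) r)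
        (((continuous_coord r).mul (continuous_coord r))))]
      have hone : ∀ u : sphere (0 : EuclideanSpace ℝ ι) 1,
          (∑ r : ι, (u : EuclideanSpace ℝ ι) r * (u : EuclideanSpace ℝ ι) r) = 1 := by
        intro u
        simpa [sq] using sum_coord_sq u
      rw [integral_congr_ae (Filter.Eventually.of_forall fun u => hone u)]
      simp
      rfl
    have hconst : (∑ r : ι, ∫ u : sphere (0 : EuclideanSpace ℝ ι) 1,
          (u : EuclideanSpace ℝ ι) r * (u : EuclideanSpace ℝ ι) r
          ∂(volume : Measure (EuclideanSpace ℝ ι)).toSphere)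
        = (Fintype.card ι : ℝ) * ∫ u : sphere (0 : EuclideanSpace ℝ ι) 1,
          (u : EuclideanSpace ℝ ι) p * (u : EuclideanSpace ℝ ι) p
          ∂(volume : Measure (EuclideanSpace ℝ ι)).toSphere := by
      rw [Finset.sum_congr rfl (fun r _ => key r p), Finset.sum_const]
      simp [Finset.card_univ, nsmul_eq_mul]
    have hcard : (Fintype.card ι : ℝ) ≠ 0 := by
      exact_mod_cast Fintype.card_ne_zero
    have hcardI : (Fintype.card ι : ℝ) * (∫ u : sphere (0 : EuclideanSpace ℝ ι) 1,
          (u : EuclideanSpace ℝ ι) p * (u : EuclideanSpace ℝ ι) p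
          ∂(volume : Measure (EuclideanSpace ℝ ι)).toSphere)
        = (((volume : Measure (EuclideanSpace ℝ ι)).toSphere Set.univ).toReal) := by
      rw [← hconst]; exact hsum
    rw [eq_div_iff hcard, mul_comm]
    exact hcardI
  · simp only [if_neg hpq]
    have h := integral_comp_sMap (negAt p)
      (fun u : sphere (0 : EuclideanSpace ℝ ι) 1 =>
        (u : EuclideanSpace ℝ ι) p * (u : EuclideanSpace ℝ ι) q)
    have hco : ∀ u : sphere (0 : EuclideanSpace ℝ ι) 1,
        ((sMap (negAt p) u : EuclideanSpace ℝ ι) p) * ((sMap (negAt p) u : EuclideanSpace ℝ ι) q)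
        = -((u : EuclideanSpace ℝ ι) p * (u : EuclideanSpace ℝ ι) q) := by
      intro u
      have h1 : (sMap (negAt p) u : EuclideanSpace ℝ ι) p = -(u : EuclideanSpace ℝ ι) p := by
        show negAt p (u : EuclideanSpace ℝ ι) p = _
        simp
      have h2 : (sMap (negAt p) u : EuclideanSpace ℝ ι) q = (u : EuclideanSpace ℝ ι) q := by
        show negAt p (u : EuclideanSpace ℝ ι) q = _
        simp [Ne.symm hpq, hpq]
      rw [h1, h2]; ring
    rw [integral_congr_ae (Filter.Eventually.of_forall fun u => hco u), integral_neg] at h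
    linarith


lemma integral_sphere_quadratic [DecidableEq ι] {κ : Type*} [Fintype κ] (C : κ → ι → ℝ) :
    (∫ u : sphere (0 : EuclideanSpace ℝ ι) 1,
        ∑ k : κ, (∑ p : ι, C k p * (u : EuclideanSpace ℝ ι) p)^2
        ∂(volume : Measure (EuclideanSpace ℝ ι)).toSphere)
      = (∑ k : κ, ∑ p : ι, (C k p)^2) *
          (((volume : Measure (EuclideanSpace ℝ ι)).toSphere Set.univ).toReal) / Fintype.card ι := by
  have hcont : ∀ (k : κ), Continuous fun u : sphere (0 : EuclideanSpace ℝ ι) 1 =>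
      (∑ p : ι, C k p * (u : EuclideanSpace ℝ ι) p)^2 :=
    fun k => (continuous_finset_sum _ fun p _ => continuous_const.mul (continuous_coord p)).pow 2
  rw [integral_finset_sum _ (fun k _ => integrable_continuous _ (hcont k))]
  have hk : ∀ k : κ, (∫ u : sphere (0 : EuclideanSpace ℝ ι) 1,
      (∑ p : ι, C k p * (u : EuclideanSpace ℝ ι) p)^2
      ∂(volume : Measure (EuclideanSpace ℝ ι)).toSphere)
      = (∑ p : ι, (C k p)^2) *
          ((((volume : Measure (EuclideanSpace ℝ ι)).toSphere Set.univ).toReal) / Fintype.card ι) := by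
    intro k
    have hexp : ∀ u : sphere (0 : EuclideanSpace ℝ ι) 1,
        (∑ p : ι, C k p * (u : EuclideanSpace ℝ ι) p)^2
        = ∑ p : ι, ∑ q : ι,
            (C k p * C k q) * ((u : EuclideanSpace ℝ ι) p * (u : EuclideanSpace ℝ ι) q) := by
      intro u
      rw [sq, Finset.sum_mul_sum]
      exact Finset.sum_congr rfl fun p _ => Finset.sum_congr rfl fun q _ => by ring
    rw [integral_congr_ae (Filter.Eventually.of_forall fun u => hexp u)]
    rw [integral_finset_sum _ (fun p _ => integrable_continuous
      (fun u : sphere (0 : EuclideanSpace ℝ ι) 1 => ∑ q : ι,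
        (C k p * C k q) * ((u : EuclideanSpace ℝ ι) p * (u : EuclideanSpace ℝ ι) q))
      (continuous_finset_sum _ fun q _ =>
        continuous_const.mul ((continuous_coord p).mul (continuous_coord q))))]
    have : ∀ p : ι, (∫ u : sphere (0 : EuclideanSpace ℝ ι) 1,
        ∑ q : ι, (C k p * C k q) * ((u : EuclideanSpace ℝ ι) p * (u : EuclideanSpace ℝ ι) q)
        ∂(volume : Measure (EuclideanSpace ℝ ι)).toSphere)
        = (C k p)^2 *
          ((((volume : Measure (EuclideanSpace ℝ ι)).toSphere Set.univ).toReal) / Fintype.card ι) := by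
      intro p
      rw [integral_finset_sum _ (fun q _ => integrable_continuous
        (fun u : sphere (0 : EuclideanSpace ℝ ι) 1 =>
          (C k p * C k q) * ((u : EuclideanSpace ℝ ι) p * (u : EuclideanSpace ℝ ι) q))
        (continuous_const.mul ((continuous_coord p).mul (continuous_coord q))))]
      have hq : ∀ q : ι, (∫ u : sphere (0 : EuclideanSpace ℝ ι) 1,
          (C k p * C k q) * ((u : EuclideanSpace ℝ ι) p * (u : EuclideanSpace ℝ ι) q)
          ∂(volume : Measure (EuclideanSpace ℝ ι)).toSphere)
          = (C k p * C k q) * (if p = q then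
              (((volume : Measure (EuclideanSpace ℝ ι)).toSphere Set.univ).toReal) / Fintype.card ι
            else 0) := by
        intro q
        rw [MeasureTheory.integral_const_mul, integral_coord_mul]
      rw [Finset.sum_congr rfl fun q _ => hq q]
      simp only [mul_ite, mul_zero]
      rw [Finset.sum_ite_eq]
      simp [sq]
    rw [Finset.sum_congr rfl fun p _ => this p, ← Finset.sum_mul]
  rw [Finset.sum_congr rfl fun k _ => hk k, ← Finset.sum_mul, mul_div_assoc]

lemma euclid_norm_sq {κ : Type*} [Fintype κ] (w : EuclideanSpace ℝ κ) :
    ‖w‖^2 = ∑ k, (w k)^2 := by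
  rw [EuclideanSpace.norm_eq, Real.sq_sqrt (by positivity)]
  simp [Real.norm_eq_abs, sq_abs]


lemma part1_term {n : ℕ} (B : Matrix (Fin n) (Fin n) ℝ) (y : EuclideanSpace ℝ (Fin n))
    (i j : Fin n) :
    ‖Matrix.toEuclideanLin (-(B * Matrix.single i j 1)) y‖ ^ 2
      = (∑ k, (B k i)^2) * (y j)^2 := by
  rw [euclid_norm_sq]
  have hc : ∀ k, (Matrix.toEuclideanLin (-(B * Matrix.single i j 1)) y) k
      = -(B k i * y j) := by
    intro k
    rw [Matrix.toEuclideanLin_apply, PiLp.toLp_apply]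
    simp only [Matrix.mulVec, dotProduct, Matrix.neg_apply, Matrix.mul_apply,
      Matrix.single, Matrix.of_apply, PiLp.toLp_apply, ite_and, mul_ite, mul_one,
      mul_zero, neg_mul]
    simp [Finset.sum_ite_eq, ite_mul, zero_mul]
  rw [Finset.sum_congr rfl fun k _ => by rw [hc k]]
  simp only [neg_sq, mul_pow]
  rw [← Finset.sum_mul]

lemma part2_integrand {n : ℕ} (B : Matrix (Fin n) (Fin n) ℝ) (y : EuclideanSpace ℝ (Fin n))
    (x : EuclideanSpace ℝ (Fin n × Fin n)) :
    ‖Matrix.toEuclideanLin (-(B * Matrix.of fun i j => x (i, j))) y‖ ^ 2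
      = ∑ k, (∑ p : Fin n × Fin n, (-(B k p.1 * y p.2)) * x p)^2 := by
  rw [euclid_norm_sq]
  refine Finset.sum_congr rfl fun k _ => ?_
  congr 1
  rw [Matrix.toEuclideanLin_apply, PiLp.toLp_apply]
  simp only [Matrix.mulVec, dotProduct, Matrix.neg_apply, Matrix.mul_apply, Matrix.of_apply,
    PiLp.toLp_apply]
  rw [Fintype.sum_prod_type]
  rw [Finset.sum_comm]
  refine Finset.sum_congr rfl fun l _ => ?_
  rw [neg_mul, Finset.sum_mul, ← Finset.sum_neg_distrib]
  exact Finset.sum_congr rfl fun i _ => by ring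

end AuxCond

end AuxCond

open AuxCond

/-- **Average condition number for linear system solving (fixed right-hand side).**
Let `A` be an invertible `n×n` real matrix and `y ∈ ℝ^n`, and consider the
condition matrix `DG(Ȧ) = -A⁻¹ Ȧ y` on `M_n(ℝ)` with the Frobenius inner product.
Then the Frobenius (Hilbert–Schmidt) norm of `DG` (computed over the orthonormal
basis of standard basis matrices) equals `‖A⁻¹‖_F · ‖y‖`; consequently the
average condition number `κ_av = [(1/vol S^{n²-1}) ∫_{S^{n²-1}} ‖DG‖²]^{1/2}`
equals `‖A⁻¹‖_F · ‖y‖ / n`, which is at most `(1/√n)` times the operator norm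
`‖A⁻¹‖ · ‖y‖` of `DG`. -/
theorem stmt_8 (n : ℕ) (hn : 1 ≤ n) (A : Matrix (Fin n) (Fin n) ℝ)
    (hA : IsUnit A.det) (y : EuclideanSpace ℝ (Fin n)) :
    Real.sqrt (∑ i, ∑ j,
        ‖Matrix.toEuclideanLin (-(A⁻¹ * Matrix.single i j 1)) y‖ ^ 2)
      = Real.sqrt (∑ i, ∑ j, (A⁻¹ i j) ^ 2) * ‖y‖ ∧
    Real.sqrt
        ((1 / ((volume : Measure (EuclideanSpace ℝ (Fin n × Fin n))).toSphere Set.univ).toReal) *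
          ∫ x : sphere (0 : EuclideanSpace ℝ (Fin n × Fin n)) 1,
            ‖Matrix.toEuclideanLin
              (-(A⁻¹ * Matrix.of fun i j => (x : EuclideanSpace ℝ (Fin n × Fin n)) (i, j))) y‖ ^ 2
            ∂(volume : Measure (EuclideanSpace ℝ (Fin n × Fin n))).toSphere)
      = Real.sqrt (∑ i, ∑ j, (A⁻¹ i j) ^ 2) * ‖y‖ / n ∧
    Real.sqrt (∑ i, ∑ j, (A⁻¹ i j) ^ 2) * ‖y‖ / n
      ≤ (1 / Real.sqrt n) *
          (‖LinearMap.toContinuousLinearMap (Matrix.toEuclideanLin A⁻¹)‖ * ‖y‖) := by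
  haveI : Nonempty (Fin n) := ⟨⟨0, hn⟩⟩
  classical
  have hF2 : (0:ℝ) ≤ ∑ i, ∑ j, (A⁻¹ i j) ^ 2 := by positivity
  have hyn : ‖y‖^2 = ∑ j, (y j)^2 := euclid_norm_sq y
  have hnpos : (0:ℝ) < n := by exact_mod_cast hn
  refine ⟨?_, ?_, ?_⟩
  · have h1 : (∑ i, ∑ j, ‖Matrix.toEuclideanLin (-(A⁻¹ * Matrix.single i j 1)) y‖ ^ 2)
        = (∑ i, ∑ k, (A⁻¹ k i)^2) * ∑ j, (y j)^2 :=
      calc (∑ i, ∑ j, ‖Matrix.toEuclideanLin (-(A⁻¹ * Matrix.single i j 1)) y‖ ^ 2)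
          = ∑ i, ∑ j, (∑ k, (A⁻¹ k i)^2) * (y j)^2 :=
            Finset.sum_congr rfl fun i _ => Finset.sum_congr rfl fun j _ => part1_term _ y i j
        _ = (∑ i, ∑ k, (A⁻¹ k i)^2) * ∑ j, (y j)^2 := (Finset.sum_mul_sum _ _ _ _).symm
    rw [h1, show (∑ i, ∑ k, (A⁻¹ k i)^2) = ∑ i, ∑ j, (A⁻¹ i j)^2 from Finset.sum_comm,
      ← hyn, Real.sqrt_mul hF2, Real.sqrt_sq (norm_nonneg y)]
  · have hintg : ∀ x : sphere (0 : EuclideanSpace ℝ (Fin n × Fin n)) 1,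
        ‖Matrix.toEuclideanLin
            (-(A⁻¹ * Matrix.of fun i j => (x : EuclideanSpace ℝ (Fin n × Fin n)) (i, j))) y‖ ^ 2
          = ∑ k, (∑ p : Fin n × Fin n,
              (fun k (p : Fin n × Fin n) => -(A⁻¹ k p.1 * y p.2)) k p *
                (x : EuclideanSpace ℝ (Fin n × Fin n)) p)^2 :=
      fun x => part2_integrand A⁻¹ y _
    rw [integral_congr_ae (Filter.Eventually.of_forall fun x => hintg x),
      integral_sphere_quadratic]
    have hCsum : (∑ k, ∑ p : Fin n × Fin n,
          ((fun k (p : Fin n × Fin n) => -(A⁻¹ k p.1 * y p.2)) k p)^2)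
        = (∑ i, ∑ j, (A⁻¹ i j)^2) * ‖y‖^2 := by
      rw [hyn]
      calc (∑ k, ∑ p : Fin n × Fin n, (-(A⁻¹ k p.1 * y p.2))^2)
          = ∑ k, ∑ i, ∑ j, (A⁻¹ k i)^2 * (y j)^2 := by
            refine Finset.sum_congr rfl fun k _ => ?_
            rw [Fintype.sum_prod_type]
            exact Finset.sum_congr rfl fun i _ => Finset.sum_congr rfl fun j _ => by ring
        _ = ∑ k, (∑ i, (A⁻¹ k i)^2) * (∑ j, (y j)^2) :=
            Finset.sum_congr rfl fun k _ => (Finset.sum_mul_sum _ _ _ _).symm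
        _ = (∑ k, ∑ i, (A⁻¹ k i)^2) * (∑ j, (y j)^2) := by rw [Finset.sum_mul]
    rw [hCsum]
    have hT : 0 < (((volume : Measure (EuclideanSpace ℝ (Fin n × Fin n))).toSphere
        Set.univ)).toReal := by
      refine ENNReal.toReal_pos ?_ (measure_ne_top _ _)
      rw [Measure.toSphere_apply_univ]
      refine (ENNReal.mul_pos ?_ ?_).ne'
      · rw [Ne, Nat.cast_eq_zero, finrank_euclideanSpace, Fintype.card_prod, Fintype.card_fin]
        exact Nat.mul_ne_zero (by omega) (by omega)
      · exact (measure_ball_pos _ _ one_pos).ne'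
    have hcard : ((Fintype.card (Fin n × Fin n)) : ℝ) = (n : ℝ) * n := by
      simp [Fintype.card_prod]
    have key : (1 / (((volume : Measure (EuclideanSpace ℝ (Fin n × Fin n))).toSphere
            Set.univ)).toReal) *
        ((∑ i, ∑ j, (A⁻¹ i j)^2) * ‖y‖^2 *
          (((volume : Measure (EuclideanSpace ℝ (Fin n × Fin n))).toSphere Set.univ)).toReal /
          (Fintype.card (Fin n × Fin n)))
        = (Real.sqrt (∑ i, ∑ j, (A⁻¹ i j)^2) * ‖y‖ / n)^2 := by
      have halg : ∀ a c t : ℝ, t ≠ 0 → (1/t) * (a * t / c) = a / c := by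
        intro a c t ht
        field_simp [ht]
      rw [hcard, halg _ _ _ hT.ne', div_pow, mul_pow, Real.sq_sqrt hF2]
      ring
    rw [key, Real.sqrt_sq (by positivity)]
  · have hss : Real.sqrt n * Real.sqrt n = (n:ℝ) := Real.mul_self_sqrt (Nat.cast_nonneg n)
    have hs0 : Real.sqrt n ≠ 0 := by
      rw [Ne, Real.sqrt_eq_zero (Nat.cast_nonneg n)]
      exact hnpos.ne'
    set T := LinearMap.toContinuousLinearMap (Matrix.toEuclideanLin A⁻¹) with hTdef
    have hcol : ∀ j, (∑ i, (A⁻¹ i j)^2) ≤ ‖T‖^2 := by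
      intro j
      have h1 : (∑ i, (A⁻¹ i j)^2) = ‖T (EuclideanSpace.single j (1:ℝ))‖^2 := by
        rw [euclid_norm_sq]
        refine Finset.sum_congr rfl fun i _ => ?_
        congr 1
        have h0 : (T (EuclideanSpace.single j (1:ℝ)))
            = Matrix.toEuclideanLin A⁻¹ (EuclideanSpace.single j (1:ℝ)) := rfl
        rw [h0, Matrix.toEuclideanLin_apply, PiLp.toLp_apply]
        simp [Matrix.mulVec, dotProduct, EuclideanSpace.single_apply, mul_ite,
          Finset.sum_ite_eq', PiLp.toLp_apply]
      rw [h1]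
      have h2 : ‖T (EuclideanSpace.single j (1:ℝ))‖ ≤ ‖T‖ := by
        calc ‖T (EuclideanSpace.single j (1:ℝ))‖
            ≤ ‖T‖ * ‖EuclideanSpace.single j (1:ℝ)‖ := T.le_opNorm _
          _ = ‖T‖ := by rw [EuclideanSpace.norm_single]; simp
      exact pow_le_pow_left₀ (norm_nonneg _) h2 2
    have hFle : (∑ i, ∑ j, (A⁻¹ i j)^2) ≤ (n:ℝ) * ‖T‖^2 := by
      rw [show (∑ i, ∑ j, (A⁻¹ i j)^2) = ∑ j, ∑ i, (A⁻¹ i j)^2 from Finset.sum_comm]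
      calc (∑ j, ∑ i, (A⁻¹ i j)^2) ≤ ∑ _j : Fin n, ‖T‖^2 :=
            Finset.sum_le_sum fun j _ => hcol j
        _ = n * ‖T‖^2 := by simp [Finset.sum_const, Finset.card_univ, nsmul_eq_mul]
    have hsqrt : Real.sqrt (∑ i, ∑ j, (A⁻¹ i j)^2) ≤ Real.sqrt n * ‖T‖ :=
      calc Real.sqrt (∑ i, ∑ j, (A⁻¹ i j)^2) ≤ Real.sqrt ((n:ℝ) * ‖T‖^2) :=
            Real.sqrt_le_sqrt hFle
        _ = Real.sqrt n * ‖T‖ := by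
            rw [Real.sqrt_mul (Nat.cast_nonneg n), Real.sqrt_sq (norm_nonneg _)]
    have hdiv : Real.sqrt (∑ i, ∑ j, (A⁻¹ i j)^2) * ‖y‖ / n
        ≤ Real.sqrt n * ‖T‖ * ‖y‖ / n := by
      gcongr
    have hrhs : Real.sqrt n * ‖T‖ * ‖y‖ / n = (1 / Real.sqrt n) * (‖T‖ * ‖y‖) := by
      field_simp
      rw [Real.sq_sqrt (Nat.cast_nonneg n)]
      ring
    rw [← hrhs]
    exact hdiv
end

section
/- Let A be an invertible n×n real matrix, b ∈ ℝ^n, y = A^{-1}b, and DG : M_n(ℝ) × ℝ^n → ℝ^n the linear map DG(Ȧ, ḃ) = A^{-1}(ḃ − Ȧ y). Then the average condition number of DG equals (‖A^{-1}‖_F · √(1 + ‖y‖²)) / √(n² + n), which is at most 1/√(n+1) times the operator norm ‖A^{-1}‖·√(1+‖y‖²) of DG. -/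
open MeasureTheory Matrix Metric

section CondAux

open Set
open scoped Pointwise

noncomputable section

variable {ι : Type*} [Fintype ι]

private def sphIso (e : EuclideanSpace ℝ ι ≃ₗᵢ[ℝ] EuclideanSpace ℝ ι) :
    sphere (0 : EuclideanSpace ℝ ι) 1 → sphere (0 : EuclideanSpace ℝ ι) 1 :=
  fun x => ⟨e x, by
    have h := mem_sphere_zero_iff_norm.mp x.2
    simp [mem_sphere_zero_iff_norm, h]⟩

private lemma sphIso_continuous (e : EuclideanSpace ℝ ι ≃ₗᵢ[ℝ] EuclideanSpace ℝ ι) :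
    Continuous (sphIso e) :=
  Continuous.subtype_mk (e.continuous.comp continuous_subtype_val) _

private lemma sphIso_measurePreserving (e : EuclideanSpace ℝ ι ≃ₗᵢ[ℝ] EuclideanSpace ℝ ι) :
    MeasurePreserving (sphIso e)
      (volume : Measure (EuclideanSpace ℝ ι)).toSphere
      (volume : Measure (EuclideanSpace ℝ ι)).toSphere := by
  refine ⟨(sphIso_continuous e).measurable, ?_⟩
  refine Measure.ext fun s hs => ?_
  rw [Measure.map_apply (sphIso_continuous e).measurable hs,
    Measure.toSphere_apply' _ ((sphIso_continuous e).measurable hs),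
    Measure.toSphere_apply' _ hs]
  congr 1
  have himg : ((↑) '' (sphIso e ⁻¹' s) : Set (EuclideanSpace ℝ ι)) = e ⁻¹' ((↑) '' s) := by
    ext z
    constructor
    · rintro ⟨x, hx, rfl⟩
      exact ⟨sphIso e x, hx, rfl⟩
    · intro hz
      obtain ⟨w, hw, hwz⟩ := hz
      have hz1 : ‖z‖ = 1 := by
        have h1 : ‖(w : EuclideanSpace ℝ ι)‖ = 1 := mem_sphere_zero_iff_norm.mp w.2
        have : ‖e z‖ = 1 := by rw [← hwz]; exact h1
        simpa using this
      refine ⟨⟨z, mem_sphere_zero_iff_norm.mpr hz1⟩, ?_, rfl⟩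
      show sphIso e ⟨z, _⟩ ∈ s
      have : sphIso e ⟨z, mem_sphere_zero_iff_norm.mpr hz1⟩ = w := Subtype.ext hwz.symm
      rw [this]; exact hw
  rw [himg]
  have hsmul : Ioo (0:ℝ) 1 • (e ⁻¹' ((↑) '' s)) = e ⁻¹' (Ioo (0:ℝ) 1 • ((↑) '' s)) := by
    ext z
    constructor
    · rintro ⟨r, hr, x, hx, rfl⟩
      exact ⟨r, hr, e x, hx, (_root_.map_smul e r x).symm⟩
    · rintro ⟨r, hr, t, ht, hrt⟩
      refine ⟨r, hr, e.symm t, by simpa using ht, ?_⟩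
      apply e.injective
      rw [_root_.map_smul]
      simpa using hrt
  rw [hsmul]
  exact (e.measurePreserving).measure_preimage_emb
    (e.toHomeomorph.toMeasurableEquiv.measurableEmbedding) _

private def sphEquiv (e : EuclideanSpace ℝ ι ≃ₗᵢ[ℝ] EuclideanSpace ℝ ι) :
    sphere (0 : EuclideanSpace ℝ ι) 1 ≃ᵐ sphere (0 : EuclideanSpace ℝ ι) 1 where
  toFun := sphIso e
  invFun := sphIso e.symm
  left_inv x := Subtype.ext (e.symm_apply_apply x)
  right_inv x := Subtype.ext (e.apply_symm_apply x)
  measurable_toFun := (sphIso_continuous e).measurable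
  measurable_invFun := (sphIso_continuous e.symm).measurable

private def phiS (v : EuclideanSpace ℝ ι) : ℝ :=
  ∫ x : sphere (0 : EuclideanSpace ℝ ι) 1,
    (inner ℝ (x : EuclideanSpace ℝ ι) v : ℝ) ^ 2
    ∂(volume : Measure (EuclideanSpace ℝ ι)).toSphere

private lemma phiS_def (v : EuclideanSpace ℝ ι) :
    phiS v = ∫ x : sphere (0 : EuclideanSpace ℝ ι) 1,
      (inner ℝ (x : EuclideanSpace ℝ ι) v : ℝ) ^ 2
      ∂(volume : Measure (EuclideanSpace ℝ ι)).toSphere := rfl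

private lemma phiS_isometry (e : EuclideanSpace ℝ ι ≃ₗᵢ[ℝ] EuclideanSpace ℝ ι)
    (v : EuclideanSpace ℝ ι) : phiS (e v) = phiS v := by
  have h := (sphIso_measurePreserving e).integral_comp (sphEquiv e).measurableEmbedding
    (fun x : sphere (0 : EuclideanSpace ℝ ι) 1 => (inner ℝ (x : EuclideanSpace ℝ ι) (e v) : ℝ) ^ 2)
  rw [phiS, ← h, phiS]
  congr 1
  funext x
  show (inner ℝ (e (x : EuclideanSpace ℝ ι)) (e v) : ℝ) ^ 2 = _
  rw [e.inner_map_map]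

private lemma phiS_smul (c : ℝ) (v : EuclideanSpace ℝ ι) : phiS (c • v) = c ^ 2 * phiS v := by
  rw [phiS, phiS, ← MeasureTheory.integral_const_mul]
  congr 1
  funext x
  rw [real_inner_smul_right]
  ring

private lemma integrable_inner_sq (v : EuclideanSpace ℝ ι) :
    Integrable (fun x : sphere (0 : EuclideanSpace ℝ ι) 1 =>
      (inner ℝ (x : EuclideanSpace ℝ ι) v : ℝ) ^ 2)
      (volume : Measure (EuclideanSpace ℝ ι)).toSphere := by
  have hc : Continuous fun x : sphere (0 : EuclideanSpace ℝ ι) 1 =>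
      (inner ℝ (x : EuclideanSpace ℝ ι) v : ℝ) ^ 2 :=
    (continuous_subtype_val.inner continuous_const).pow 2
  refine hc.integrable_of_hasCompactSupport ?_
  exact IsCompact.of_isClosed_subset isCompact_univ (isClosed_tsupport _) (subset_univ _)

private lemma phiS_unit_eq [Nonempty ι] [DecidableEq ι] {w w' : EuclideanSpace ℝ ι}
    (hw : ‖w‖ = 1) (hw' : ‖w'‖ = 1) : phiS w = phiS w' := by
  obtain ⟨i₀⟩ := ‹Nonempty ι›
  have card : Module.finrank ℝ (EuclideanSpace ℝ ι) = Fintype.card ι := finrank_euclideanSpace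
  have horth : ∀ u : EuclideanSpace ℝ ι, ‖u‖ = 1 →
      Orthonormal ℝ (({i₀} : Set ι).restrict (fun _ => u)) := by
    intro u hu
    rw [orthonormal_iff_ite]
    rintro ⟨i, hi⟩ ⟨j, hj⟩
    have hij : (⟨i, hi⟩ : ({i₀} : Set ι)) = ⟨j, hj⟩ := by
      apply Subtype.ext
      show i = j
      rw [mem_singleton_iff] at hi hj
      rw [hi, hj]
    rw [if_pos hij]
    show (inner ℝ u u : ℝ) = 1
    rw [real_inner_self_eq_norm_sq, hu]; norm_num
  obtain ⟨bw, hbw⟩ := (horth w hw).exists_orthonormalBasis_extension_of_card_eq card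
  obtain ⟨bw', hbw'⟩ := (horth w' hw').exists_orthonormalBasis_extension_of_card_eq card
  have h1 : bw i₀ = w := hbw i₀ rfl
  have h2 : bw' i₀ = w' := hbw' i₀ rfl
  have : (bw.repr.trans bw'.repr.symm) w = w' := by
    simp only [LinearIsometryEquiv.trans_apply]
    rw [← h1, OrthonormalBasis.repr_self, OrthonormalBasis.repr_symm_single, h2]
  rw [← this, phiS_isometry]

private lemma phiS_eq [Nonempty ι] [DecidableEq ι] (v : EuclideanSpace ℝ ι) :
    phiS v = ‖v‖ ^ 2 *
      (((volume : Measure (EuclideanSpace ℝ ι)).toSphere univ).toReal / Fintype.card ι) := by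
  classical
  obtain ⟨i₀⟩ := ‹Nonempty ι›
  set σr := ((volume : Measure (EuclideanSpace ℝ ι)).toSphere univ).toReal with hσr
  have hu₀ : ‖(EuclideanSpace.single i₀ (1:ℝ) : EuclideanSpace ℝ ι)‖ = 1 := by
    simp [EuclideanSpace.norm_single]
  have hsum : (Fintype.card ι : ℝ) * phiS (EuclideanSpace.single i₀ (1:ℝ)) = σr := by
    have heach : ∀ i : ι, phiS (EuclideanSpace.single i (1:ℝ) : EuclideanSpace ℝ ι)
        = phiS (EuclideanSpace.single i₀ (1:ℝ)) := fun i =>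
      phiS_unit_eq (by simp [EuclideanSpace.norm_single]) hu₀
    have hsum2 : ∑ i : ι, phiS (EuclideanSpace.single i (1:ℝ) : EuclideanSpace ℝ ι) = σr := by
      have hswap := (integral_finset_sum (μ := (volume : Measure (EuclideanSpace ℝ ι)).toSphere)
        (Finset.univ : Finset ι)
        (f := fun i (x : sphere (0 : EuclideanSpace ℝ ι) 1) =>
          (inner ℝ (x : EuclideanSpace ℝ ι) (EuclideanSpace.single i (1:ℝ)) : ℝ) ^ 2)
        (fun i _ => integrable_inner_sq _))
      beta_reduce at hswap
      have hpt : ∀ x : sphere (0 : EuclideanSpace ℝ ι) 1,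
          ∑ i : ι, (inner ℝ (x : EuclideanSpace ℝ ι) (EuclideanSpace.single i (1:ℝ)) : ℝ) ^ 2
            = 1 := by
        intro x
        have hx : ‖(x : EuclideanSpace ℝ ι)‖ = 1 := mem_sphere_zero_iff_norm.mp x.2
        have hn : ‖(x : EuclideanSpace ℝ ι)‖ ^ 2 = ∑ i : ι, ‖(x : EuclideanSpace ℝ ι) i‖ ^ 2 :=
          PiLp.norm_sq_eq_of_L2 _ _
        rw [hx, one_pow] at hn
        have hterm : ∀ i : ι,
            (inner ℝ (x : EuclideanSpace ℝ ι) (EuclideanSpace.single i (1:ℝ)) : ℝ) ^ 2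
              = ‖(x : EuclideanSpace ℝ ι) i‖ ^ 2 := by
          intro i
          rw [EuclideanSpace.inner_single_right]
          simp [Real.norm_eq_abs, sq_abs]
        rw [Finset.sum_congr rfl fun i _ => hterm i]
        exact hn.symm
      simp only [phiS_def]
      rw [← hswap]
      rw [show (fun x : sphere (0 : EuclideanSpace ℝ ι) 1 =>
          ∑ i : ι, (inner ℝ (x : EuclideanSpace ℝ ι) (EuclideanSpace.single i (1:ℝ)) : ℝ) ^ 2)
          = fun _ => (1:ℝ) from funext hpt]
      rw [integral_const, smul_eq_mul, mul_one, hσr]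
      rfl
    calc (Fintype.card ι : ℝ) * phiS (EuclideanSpace.single i₀ (1:ℝ))
        = ∑ _i : ι, phiS (EuclideanSpace.single i₀ (1:ℝ)) := by
          rw [Finset.sum_const, Finset.card_univ, nsmul_eq_mul]
      _ = ∑ i : ι, phiS (EuclideanSpace.single i (1:ℝ) : EuclideanSpace ℝ ι) := by
          exact (Finset.sum_congr rfl fun i _ => (heach i)).symm
      _ = σr := hsum2
  have hcard : (0:ℝ) < Fintype.card ι := by
    exact_mod_cast Fintype.card_pos
  have hval : phiS (EuclideanSpace.single i₀ (1:ℝ) : EuclideanSpace ℝ ι)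
      = σr / Fintype.card ι := by
    field_simp
    linarith [hsum]
  by_cases hv : v = 0
  · subst hv
    have : phiS (0 : EuclideanSpace ℝ ι) = 0 := by
      rw [phiS_def]
      simp
    rw [this]
    simp
  · have hnv : ‖v‖ ≠ 0 := by simpa using hv
    set u : EuclideanSpace ℝ ι := ‖v‖⁻¹ • v with hu
    have hu1 : ‖u‖ = 1 := by
      rw [hu, norm_smul]
      simp [abs_of_nonneg (inv_nonneg.mpr (norm_nonneg v)), inv_mul_cancel₀ hnv]
    have hvu : v = ‖v‖ • u := by
      rw [hu, smul_inv_smul₀ hnv]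
    calc phiS v = phiS (‖v‖ • u) := by rw [← hvu]
      _ = ‖v‖ ^ 2 * phiS u := phiS_smul _ _
      _ = ‖v‖ ^ 2 * phiS (EuclideanSpace.single i₀ (1:ℝ)) := by
          rw [phiS_unit_eq hu1 hu₀]
      _ = _ := by rw [hval]


private lemma comp_eq (n : ℕ) (B : Matrix (Fin n) (Fin n) ℝ) (y : EuclideanSpace ℝ (Fin n))
    (x : EuclideanSpace ℝ ((Fin n × Fin n) ⊕ Fin n)) (k : Fin n) :
    (Matrix.toEuclideanLin B
      ((EuclideanSpace.equiv (Fin n) ℝ).symm (fun j => x (Sum.inr j)) -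
        Matrix.toEuclideanLin (Matrix.of fun i j => x (Sum.inl (i, j))) y)) k
    = inner ℝ (x : EuclideanSpace ℝ ((Fin n × Fin n) ⊕ Fin n))
        ((EuclideanSpace.equiv ((Fin n × Fin n) ⊕ Fin n) ℝ).symm
          (Sum.elim (fun p : Fin n × Fin n => -(B k p.1 * y p.2)) (fun j => B k j))) := by
  simp only [PiLp.inner_apply, Matrix.toEuclideanLin_apply, Matrix.mulVec, dotProduct,
    Fintype.sum_sum_type, Fintype.sum_prod_type, RCLike.inner_apply, starRingEnd_apply]
  simp [Matrix.toEuclideanLin_apply, Matrix.mulVec, dotProduct, mul_sub,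
    Finset.sum_sub_distrib, Finset.mul_sum, Fintype.sum_prod_type]
  rw [sub_eq_neg_add]
  congr 1
  · congr 1
    refine Finset.sum_congr rfl fun j _ => ?_
    refine Finset.sum_congr rfl fun i _ => ?_
    ring

private lemma normv_eq (n : ℕ) (B : Matrix (Fin n) (Fin n) ℝ) (y : EuclideanSpace ℝ (Fin n))
    (k : Fin n) :
    ‖((EuclideanSpace.equiv ((Fin n × Fin n) ⊕ Fin n) ℝ).symm
        (Sum.elim (fun p : Fin n × Fin n => -(B k p.1 * y p.2)) (fun j => B k j))
        : EuclideanSpace ℝ ((Fin n × Fin n) ⊕ Fin n))‖ ^ 2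
      = (∑ j, B k j ^ 2) * (1 + ‖y‖ ^ 2) := by
  rw [PiLp.norm_sq_eq_of_L2]
  have hy2 : ‖y‖ ^ 2 = ∑ i, (y i) ^ 2 := by
    rw [PiLp.norm_sq_eq_of_L2]
    exact Finset.sum_congr rfl fun i _ => by simp [Real.norm_eq_abs, sq_abs]
  rw [hy2]
  simp only [Fintype.sum_sum_type, Fintype.sum_prod_type]
  have hc : ∀ t : (Fin n × Fin n) ⊕ Fin n,
      ‖((EuclideanSpace.equiv ((Fin n × Fin n) ⊕ Fin n) ℝ).symm
        (Sum.elim (fun p : Fin n × Fin n => -(B k p.1 * y p.2)) (fun j => B k j))) t‖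
      = ‖Sum.elim (fun p : Fin n × Fin n => -(B k p.1 * y p.2)) (fun j => B k j) t‖ := by
    intro t; rfl
  simp only [hc, Sum.elim_inl, Sum.elim_inr, Real.norm_eq_abs, sq_abs]
  have hterm : ∀ j i : Fin n, (-(B k j * y i)) ^ 2 = B k j ^ 2 * y i ^ 2 := fun j i => by ring
  rw [Finset.sum_congr rfl fun j (_ : j ∈ Finset.univ) =>
    Finset.sum_congr rfl fun i (_ : i ∈ Finset.univ) => hterm j i]
  rw [Finset.sum_congr rfl fun j (_ : j ∈ Finset.univ) =>
    (Finset.mul_sum Finset.univ (fun i => (y i) ^ 2) (B k j ^ 2)).symm]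
  rw [← Finset.sum_mul]
  ring

end

end CondAux

/-- **Average condition number for general linear system solving.**
Let `A` be an invertible `n×n` real matrix, `b ∈ ℝ^n`, `y = A⁻¹ b`, and consider
the condition matrix `DG(Ȧ, ḃ) = A⁻¹(ḃ - Ȧ y)` on the `(n²+n)`-dimensional
input space `M_n(ℝ) × ℝ^n` (Frobenius times Euclidean inner product).  The
average condition number `κ_av = [(1/vol S^{n²+n-1}) ∫ ‖DG‖²]^{1/2}` equals
`‖A⁻¹‖_F · √(1 + ‖y‖²) / √(n² + n)`, which is at most `1/√(n+1)` times the
operator norm `‖A⁻¹‖ · √(1 + ‖y‖²)` of `DG`. -/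
theorem stmt_10 (n : ℕ) (hn : 1 ≤ n) (A : Matrix (Fin n) (Fin n) ℝ)
    (hA : IsUnit A.det) (b : EuclideanSpace ℝ (Fin n))
    (y : EuclideanSpace ℝ (Fin n)) (hy : y = Matrix.toEuclideanLin A⁻¹ b) :
    Real.sqrt
        ((1 / ((volume : Measure (EuclideanSpace ℝ ((Fin n × Fin n) ⊕ Fin n))).toSphere
            Set.univ).toReal) *
          ∫ x : sphere (0 : EuclideanSpace ℝ ((Fin n × Fin n) ⊕ Fin n)) 1,
            ‖Matrix.toEuclideanLin A⁻¹
              ((EuclideanSpace.equiv (Fin n) ℝ).symm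
                  (fun k => (x : EuclideanSpace ℝ ((Fin n × Fin n) ⊕ Fin n)) (Sum.inr k)) -
                Matrix.toEuclideanLin
                  (Matrix.of fun i j =>
                    (x : EuclideanSpace ℝ ((Fin n × Fin n) ⊕ Fin n)) (Sum.inl (i, j))) y)‖ ^ 2
            ∂(volume : Measure (EuclideanSpace ℝ ((Fin n × Fin n) ⊕ Fin n))).toSphere)
      = Real.sqrt (∑ i, ∑ j, (A⁻¹ i j) ^ 2) * Real.sqrt (1 + ‖y‖ ^ 2) /
          Real.sqrt (n ^ 2 + n) ∧
    Real.sqrt (∑ i, ∑ j, (A⁻¹ i j) ^ 2) * Real.sqrt (1 + ‖y‖ ^ 2) / Real.sqrt (n ^ 2 + n)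
      ≤ (1 / Real.sqrt (n + 1)) *
          (‖LinearMap.toContinuousLinearMap (Matrix.toEuclideanLin A⁻¹)‖ *
            Real.sqrt (1 + ‖y‖ ^ 2)) := by
  classical
  haveI : Nonempty ((Fin n × Fin n) ⊕ Fin n) := ⟨Sum.inr ⟨0, hn⟩⟩
  set B : Matrix (Fin n) (Fin n) ℝ := A⁻¹ with hB
  set E := EuclideanSpace ℝ ((Fin n × Fin n) ⊕ Fin n) with hE
  set σr := ((volume : Measure E).toSphere Set.univ).toReal with hσrdef
  set v : Fin n → E := fun k =>
    (EuclideanSpace.equiv ((Fin n × Fin n) ⊕ Fin n) ℝ).symm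
      (Sum.elim (fun p : Fin n × Fin n => -(B k p.1 * y p.2)) (fun j => B k j)) with hv
  have hcomp : ∀ (x : E) (k : Fin n),
      (Matrix.toEuclideanLin B
        ((EuclideanSpace.equiv (Fin n) ℝ).symm (fun j => x (Sum.inr j)) -
          Matrix.toEuclideanLin (Matrix.of fun i j => x (Sum.inl (i, j))) y)) k
      = inner ℝ x (v k) := fun x k => comp_eq n B y x k
  -- pointwise norms
  have hpoint : ∀ x : sphere (0 : E) 1,
      ‖Matrix.toEuclideanLin B
        ((EuclideanSpace.equiv (Fin n) ℝ).symm
            (fun k => (x : E) (Sum.inr k)) -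
          Matrix.toEuclideanLin
            (Matrix.of fun i j => (x : E) (Sum.inl (i, j))) y)‖ ^ 2
      = ∑ k : Fin n, (inner ℝ ((x : E)) (v k) : ℝ) ^ 2 := by
    intro x
    rw [PiLp.norm_sq_eq_of_L2]
    refine Finset.sum_congr rfl fun k _ => ?_
    rw [Real.norm_eq_abs, sq_abs, hcomp (x : E) k]
  -- norms of the vectors v k
  have hnormv : ∀ k : Fin n, ‖v k‖ ^ 2 = (∑ j, B k j ^ 2) * (1 + ‖y‖ ^ 2) :=
    fun k => normv_eq n B y k
  -- the integral
  have hm : (Fintype.card ((Fin n × Fin n) ⊕ Fin n) : ℝ) = (n:ℝ) ^ 2 + n := by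
    simp [Fintype.card_sum, Fintype.card_prod]
    push_cast
    ring
  have hI : (∫ x : sphere (0 : E) 1,
      ‖Matrix.toEuclideanLin B
        ((EuclideanSpace.equiv (Fin n) ℝ).symm
            (fun k => (x : E) (Sum.inr k)) -
          Matrix.toEuclideanLin
            (Matrix.of fun i j => (x : E) (Sum.inl (i, j))) y)‖ ^ 2
      ∂(volume : Measure E).toSphere)
      = ((∑ i, ∑ j, B i j ^ 2) * (1 + ‖y‖ ^ 2)) * (σr / ((n:ℝ)^2 + n)) := by
    rw [show (fun x : sphere (0 : E) 1 =>
        ‖Matrix.toEuclideanLin B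
          ((EuclideanSpace.equiv (Fin n) ℝ).symm
              (fun k => (x : E) (Sum.inr k)) -
            Matrix.toEuclideanLin
              (Matrix.of fun i j => (x : E) (Sum.inl (i, j))) y)‖ ^ 2)
        = fun x : sphere (0 : E) 1 => ∑ k : Fin n, (inner ℝ ((x : E)) (v k) : ℝ) ^ 2
        from funext hpoint]
    rw [integral_finset_sum _ (fun k _ => integrable_inner_sq (v k))]
    have : ∀ k : Fin n, (∫ x : sphere (0 : E) 1, (inner ℝ ((x : E)) (v k) : ℝ) ^ 2
        ∂(volume : Measure E).toSphere)
        = ((∑ j, B k j ^ 2) * (1 + ‖y‖ ^ 2)) * (σr / ((n:ℝ)^2 + n)) := by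
      intro k
      have h1 := phiS_eq (v k)
      rw [phiS_def] at h1
      rw [h1, hnormv k, hm, hσrdef]
    rw [Finset.sum_congr rfl fun k _ => this k, ← Finset.sum_mul, ← Finset.sum_mul]
  -- positivity of σr
  have hσpos : 0 < σr := by
    rw [hσrdef]
    apply ENNReal.toReal_pos
    · rw [Measure.toSphere_apply_univ]
      have h1 : (Module.finrank ℝ E : ENNReal) ≠ 0 := by
        have : 0 < Module.finrank ℝ E := by
          rw [finrank_euclideanSpace]
          exact Fintype.card_pos
        exact_mod_cast this.ne'
      have h2 : (volume : Measure E) (ball 0 1) ≠ 0 :=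
        (measure_ball_pos _ _ one_pos).ne'
      exact mul_ne_zero h1 h2
    · exact measure_ne_top _ _
  have hmpos : (0:ℝ) < (n:ℝ)^2 + n := by
    have : (0:ℝ) < (n:ℝ) := by exact_mod_cast hn
    positivity
  have hFnn : (0:ℝ) ≤ ∑ i, ∑ j, B i j ^ 2 :=
    Finset.sum_nonneg fun i _ => Finset.sum_nonneg fun j _ => sq_nonneg _
  have hYnn : (0:ℝ) ≤ 1 + ‖y‖ ^ 2 := by positivity
  constructor
  · rw [hI]
    have harg : 1 / σr * ((∑ i, ∑ j, B i j ^ 2) * (1 + ‖y‖ ^ 2) * (σr / ((n:ℝ)^2 + n)))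
        = ((∑ i, ∑ j, B i j ^ 2) * (1 + ‖y‖ ^ 2)) / ((n:ℝ)^2 + n) := by
      field_simp
    rw [harg, Real.sqrt_div (by positivity), Real.sqrt_mul hFnn]
  · -- inequality part
    set T := LinearMap.toContinuousLinearMap (Matrix.toEuclideanLin B) with hT
    have hcol : ∀ j : Fin n, ‖T (EuclideanSpace.single j (1:ℝ))‖ ^ 2 = ∑ i, B i j ^ 2 := by
      intro j
      rw [PiLp.norm_sq_eq_of_L2]
      refine Finset.sum_congr rfl fun i _ => ?_
      have : (T (EuclideanSpace.single j (1:ℝ))) i = B i j := by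
        show (Matrix.toEuclideanLin B (EuclideanSpace.single j (1:ℝ))) i = B i j
        simp [Matrix.toEuclideanLin_apply, Matrix.mulVec, dotProduct,
          EuclideanSpace.single_apply]
      rw [this]
      simp [Real.norm_eq_abs, sq_abs]
    have hFle : (∑ i, ∑ j, B i j ^ 2) ≤ (n:ℝ) * ‖T‖ ^ 2 := by
      have h1 : (∑ i, ∑ j, B i j ^ 2) = ∑ j, ∑ i, B i j ^ 2 := Finset.sum_comm
      rw [h1]
      calc ∑ j : Fin n, ∑ i, B i j ^ 2
          = ∑ j : Fin n, ‖T (EuclideanSpace.single j (1:ℝ))‖ ^ 2 := by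
            exact Finset.sum_congr rfl fun j _ => (hcol j).symm
        _ ≤ ∑ _j : Fin n, ‖T‖ ^ 2 := by
            refine Finset.sum_le_sum fun j _ => ?_
            have hb : ‖T (EuclideanSpace.single j (1:ℝ))‖ ≤ ‖T‖ := by
              have h := T.le_opNorm (EuclideanSpace.single j (1:ℝ))
              have h1 : ‖(EuclideanSpace.single j (1:ℝ) : EuclideanSpace ℝ (Fin n))‖ = 1 :=
                by rw [EuclideanSpace.norm_single]; exact norm_one
              rw [h1, mul_one] at h
              exact h
            exact pow_le_pow_left₀ (norm_nonneg _) hb 2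
        _ = (n:ℝ) * ‖T‖ ^ 2 := by
            rw [Finset.sum_const, Finset.card_univ, Fintype.card_fin, nsmul_eq_mul]
    have hsqrtF : Real.sqrt (∑ i, ∑ j, B i j ^ 2) ≤ Real.sqrt n * ‖T‖ := by
      calc Real.sqrt (∑ i, ∑ j, B i j ^ 2) ≤ Real.sqrt ((n:ℝ) * ‖T‖ ^ 2) :=
            Real.sqrt_le_sqrt hFle
        _ = Real.sqrt n * ‖T‖ := by
            rw [Real.sqrt_mul (by positivity), Real.sqrt_sq (norm_nonneg _)]
    have hnpos : (0:ℝ) < Real.sqrt n := Real.sqrt_pos.mpr (by exact_mod_cast hn)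
    have hn1pos : (0:ℝ) < Real.sqrt ((n:ℝ) + 1) := Real.sqrt_pos.mpr (by positivity)
    have hsplit : Real.sqrt ((n:ℝ)^2 + n) = Real.sqrt n * Real.sqrt ((n:ℝ) + 1) := by
      rw [← Real.sqrt_mul (by positivity)]
      congr 1
      ring
    rw [hsplit]
    rw [div_le_iff₀ (by positivity)]
    have hrhs : 1 / Real.sqrt ((n:ℝ) + 1) * (‖T‖ * Real.sqrt (1 + ‖y‖ ^ 2)) *
        (Real.sqrt n * Real.sqrt ((n:ℝ) + 1))
        = (Real.sqrt n * ‖T‖) * Real.sqrt (1 + ‖y‖ ^ 2) := by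
      have hstep : 1 / Real.sqrt ((n:ℝ) + 1) * (‖T‖ * Real.sqrt (1 + ‖y‖ ^ 2)) *
          (Real.sqrt n * Real.sqrt ((n:ℝ) + 1))
          = (Real.sqrt n * ‖T‖) * Real.sqrt (1 + ‖y‖ ^ 2) *
            (Real.sqrt ((n:ℝ) + 1) / Real.sqrt ((n:ℝ) + 1)) := by ring
      rw [hstep, div_self hn1pos.ne', mul_one]
    rw [hrhs]
    exact mul_le_mul_of_nonneg_right hsqrtF (Real.sqrt_nonneg _)
end

section
/- Let u, v ∈ ℂ^n with ⟨u, v⟩ ≠ 0, where ⟨·,·⟩ is the standard Hermitian inner product. Consider the linear functional DG₂ : M_n(ℂ) → ℂ given by DG₂(Ȧ) = ⟨u, Ȧv⟩ / ⟨u, v⟩, where M_n(ℂ) carries the Frobenius Hermitian inner product. Then the operator norm of DG₂ equals ‖u‖ · ‖v‖ / |⟨u, v⟩|. -/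
open Matrix

private lemma frob_inner_eq (n : ℕ) (u v : EuclideanSpace ℂ (Fin n))
    (dA : Matrix (Fin n) (Fin n) ℂ) :
    (inner ℂ u (Matrix.toEuclideanLin dA v) : ℂ) =
      inner ℂ ((WithLp.equiv 2 (Fin n × Fin n → ℂ)).symm
          (fun p => u p.1 * (starRingEnd ℂ) (v p.2)))
        ((WithLp.equiv 2 (Fin n × Fin n → ℂ)).symm (fun p => dA p.1 p.2)) := by
  have h1 : (inner ℂ u (Matrix.toEuclideanLin dA v) : ℂ) =
      ∑ i, ∑ j, (starRingEnd ℂ) (u i) * v j * dA i j := by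
    simp only [PiLp.inner_apply, RCLike.inner_apply, Matrix.toEuclideanLin_apply,
      WithLp.equiv_symm_apply, PiLp.toLp_apply, Matrix.mulVec, dotProduct,
      Finset.mul_sum, Finset.sum_mul]
    refine Finset.sum_congr rfl fun i _ => Finset.sum_congr rfl fun j _ => by ring
  have h2 : (inner ℂ ((WithLp.equiv 2 (Fin n × Fin n → ℂ)).symm
        (fun p => u p.1 * (starRingEnd ℂ) (v p.2)))
      ((WithLp.equiv 2 (Fin n × Fin n → ℂ)).symm (fun p => dA p.1 p.2)) : ℂ) =
      ∑ i, ∑ j, (starRingEnd ℂ) (u i) * v j * dA i j := by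
    simp only [PiLp.inner_apply, RCLike.inner_apply, WithLp.equiv_symm_apply, PiLp.toLp_apply,
      Fintype.sum_prod_type]
    exact Finset.sum_congr rfl fun i _ => Finset.sum_congr rfl fun j _ => by
      rw [RingHom.map_mul, Complex.conj_conj]
      ring
  rw [h1, h2]

private lemma frob_norm_B (n : ℕ) (u v : EuclideanSpace ℂ (Fin n)) :
    ‖(WithLp.equiv 2 (Fin n × Fin n → ℂ)).symm
      (fun p => u p.1 * (starRingEnd ℂ) (v p.2))‖ = ‖u‖ * ‖v‖ := by
  rw [EuclideanSpace.norm_eq, EuclideanSpace.norm_eq u, EuclideanSpace.norm_eq v,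
    ← Real.sqrt_mul (by positivity), Finset.sum_mul_sum]
  congr 1
  simp [Fintype.sum_prod_type, mul_pow]

private lemma frob_norm_A (n : ℕ) (dA : Matrix (Fin n) (Fin n) ℂ) :
    ‖(WithLp.equiv 2 (Fin n × Fin n → ℂ)).symm (fun p => dA p.1 p.2)‖ =
      Real.sqrt (∑ i, ∑ j, ‖dA i j‖ ^ 2) := by
  rw [EuclideanSpace.norm_eq]
  simp [Fintype.sum_prod_type]

/-- **The eigenvalue condition number.**
Let `u, v ∈ ℂ^n` with `⟨u, v⟩ ≠ 0`.  The operator norm of the functional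
`DG₂(Ȧ) = ⟨u, Ȧ v⟩ / ⟨u, v⟩` on `M_n(ℂ)` with the Frobenius Hermitian inner
product — the greatest value of `|DG₂(Ȧ)|` over matrices of Frobenius norm 1 —
equals `‖u‖ · ‖v‖ / |⟨u, v⟩|`. -/
theorem stmt_11 (n : ℕ) (hn : 1 ≤ n) (u v : EuclideanSpace ℂ (Fin n))
    (huv : (inner ℂ u v : ℂ) ≠ 0) :
    IsGreatest
      {c : ℝ | ∃ dA : Matrix (Fin n) (Fin n) ℂ,
        Real.sqrt (∑ i, ∑ j, ‖dA i j‖ ^ 2) = 1 ∧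
        c = ‖(inner ℂ u (Matrix.toEuclideanLin dA v) : ℂ) / (inner ℂ u v : ℂ)‖}
      (‖u‖ * ‖v‖ / ‖(inner ℂ u v : ℂ)‖) := by
  have hu : u ≠ 0 := fun h => huv (by simp [h])
  have hv : v ≠ 0 := fun h => huv (by simp [h])
  have hc0 : (0:ℝ) < ‖u‖ * ‖v‖ :=
    mul_pos (norm_pos_iff.mpr hu) (norm_pos_iff.mpr hv)
  have hne : ((‖u‖ * ‖v‖ : ℝ) : ℂ) ≠ 0 := Complex.ofReal_ne_zero.mpr hc0.ne'
  set B : EuclideanSpace ℂ (Fin n × Fin n) :=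
    (WithLp.equiv 2 (Fin n × Fin n → ℂ)).symm
      (fun p => u p.1 * (starRingEnd ℂ) (v p.2)) with hBdef
  have hB : ‖B‖ = ‖u‖ * ‖v‖ := frob_norm_B n u v
  have hsm : (WithLp.equiv 2 (Fin n × Fin n → ℂ)).symm
      (fun p : Fin n × Fin n =>
        (((‖u‖ * ‖v‖ : ℝ) : ℂ))⁻¹ * (u p.1 * (starRingEnd ℂ) (v p.2))) =
      (((‖u‖ * ‖v‖ : ℝ) : ℂ))⁻¹ • B := by
    rw [hBdef, WithLp.equiv_symm_apply, ← WithLp.toLp_smul]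
    rfl
  constructor
  · -- membership
    refine ⟨fun i j => (((‖u‖ * ‖v‖ : ℝ) : ℂ))⁻¹ * (u i * (starRingEnd ℂ) (v j)), ?_, ?_⟩
    · beta_reduce
      rw [← frob_norm_A n (fun i j => (((‖u‖ * ‖v‖ : ℝ) : ℂ))⁻¹ * (u i * (starRingEnd ℂ) (v j))), hsm, norm_smul]
      simp only [norm_inv, Complex.norm_real, Real.norm_eq_abs, abs_of_pos hc0, hB]
      exact inv_mul_cancel₀ hc0.ne'
    · rw [frob_inner_eq n u v (fun i j => (((‖u‖ * ‖v‖ : ℝ) : ℂ))⁻¹ * (u i * (starRingEnd ℂ) (v j))), hsm, inner_smul_right, inner_self_eq_norm_sq_to_K, hB]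
      simp only [norm_div, norm_mul, norm_inv, norm_pow, RCLike.norm_ofReal,
        Complex.norm_real, Real.norm_eq_abs, abs_norm]
      rw [abs_of_pos hc0, sq, ← mul_assoc, inv_mul_cancel₀ hc0.ne', one_mul]
  · -- upper bound
    rintro c ⟨dA, hnorm, rfl⟩
    rw [norm_div]
    gcongr
    calc ‖(inner ℂ u (Matrix.toEuclideanLin dA v) : ℂ)‖
        = ‖(inner ℂ B ((WithLp.equiv 2 (Fin n × Fin n → ℂ)).symm
            (fun p => dA p.1 p.2)) : ℂ)‖ := by rw [frob_inner_eq]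
      _ ≤ ‖B‖ * ‖(WithLp.equiv 2 (Fin n × Fin n → ℂ)).symm (fun p => dA p.1 p.2)‖ :=
          norm_inner_le_norm _ _
      _ = ‖u‖ * ‖v‖ := by rw [hB, frob_norm_A, hnorm, mul_one]
end

section
/- Let u, v ∈ ℂ^n with ⟨u, v⟩ ≠ 0, and let DG₂ : M_n(ℂ) → ℂ be the functional DG₂(Ȧ) = ⟨u, Ȧv⟩ / ⟨u, v⟩. Viewing M_n(ℂ) as a real inner product space of dimension 2n² (with inner product Re trace(B*A)) and ℂ as ℝ², the average condition number of DG₂ equals (1/n) · (‖u‖ · ‖v‖ / |⟨u, v⟩|); that is, κ_av₂(A, λ) = κ₂(A, λ)/n. -/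
open MeasureTheory Metric Set

variable {E : Type*} [NormedAddCommGroup E] [NormedSpace ℝ E] [MeasurableSpace E]
  [BorelSpace E] [FiniteDimensional ℝ E] [Nontrivial E]
  (μ : Measure E) [μ.IsAddHaarMeasure]

lemma sphere_int_eq (g : E → ℝ) :
    ∫ y : sphere (0 : E) 1, g y ∂μ.toSphere
      = (Module.finrank ℝ E : ℝ) * ∫ x in ball (0 : E) 1, g (‖x‖⁻¹ • x) ∂μ := by
  set m := Module.finrank ℝ E with hm
  have hmpos : 0 < m := Module.finrank_pos
  set G : sphere (0 : E) 1 × Ioi (0 : ℝ) → ℝ :=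
    fun p => g p.1 * (Iio (⟨1, mem_Ioi.2 one_pos⟩ : Ioi (0:ℝ))).indicator (fun _ => (1:ℝ)) p.2 with hG
  have key := (μ.measurePreserving_homeomorphUnitSphereProd).integral_comp
    (Homeomorph.measurableEmbedding _) G
  rw [MeasureTheory.integral_prod_mul (μ := μ.toSphere)
    (ν := .volumeIoiPow (m - 1)) (f := fun y => g y)
    (g := (Iio (⟨1, mem_Ioi.2 one_pos⟩ : Ioi (0:ℝ))).indicator (fun _ => (1:ℝ)))] at key
  rw [integral_indicator measurableSet_Iio, setIntegral_const, measureReal_def,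
    Measure.volumeIoiPow_apply_Iio, smul_eq_mul, mul_one] at key
  have hcast : ((m - 1 : ℕ) : ℝ) + 1 = m := by
    rw [Nat.cast_pred hmpos]; ring
  have h1 : (ENNReal.ofReal (((⟨1, mem_Ioi.2 one_pos⟩ : Ioi (0:ℝ)) : ℝ) ^ (m - 1 + 1)
      / ((m - 1 : ℕ) + 1))).toReal = 1 / m := by
    rw [hcast, one_pow]
    rw [ENNReal.toReal_ofReal (by positivity)]
  rw [h1] at key
  -- now the LHS of key
  have h2 : ∫ x : ({(0:E)}ᶜ : Set E), G (homeomorphUnitSphereProd E x) ∂(μ.comap (↑))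
      = ∫ x in ball (0:E) 1, g (‖x‖⁻¹ • x) ∂μ := by
    have : ∀ x : ({(0:E)}ᶜ : Set E), G (homeomorphUnitSphereProd E x)
        = (ball (0:E) 1).indicator (fun x => g (‖x‖⁻¹ • x)) x.1 := by
      intro x
      simp only [hG, homeomorphUnitSphereProd_apply_fst_coe, indicator]
      by_cases hx : ‖x.1‖ < 1
      · rw [if_pos (by rw [mem_Iio, ← Subtype.coe_lt_coe]; simpa [homeomorphUnitSphereProd_apply_snd_coe] using hx), if_pos (by simpa using hx), mul_one]
      · rw [if_neg (by rw [mem_Iio, not_lt, ← Subtype.coe_le_coe]; simpa [homeomorphUnitSphereProd_apply_snd_coe] using hx), if_neg (by simpa using hx), mul_zero]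
    rw [integral_congr_ae (Filter.Eventually.of_forall this),
      integral_subtype_comap (measurableSet_singleton _).compl,
      MeasureTheory.restrict_compl_singleton _,
      ← integral_indicator measurableSet_ball]
  rw [← h2, key, eq_comm, mul_comm]
  field_simp

open MeasureTheory Metric Set

variable {ι : Type*} [Fintype ι] [DecidableEq ι]

noncomputable def negCoord (a : ι) : EuclideanSpace ℝ ι ≃ₗᵢ[ℝ] EuclideanSpace ℝ ι where
  toFun x := WithLp.toLp 2 fun i => if i = a then -x i else x i
  invFun x := WithLp.toLp 2 fun i => if i = a then -x i else x i
  map_add' x y := by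
    ext i
    by_cases h : i = a <;> simp [h, PiLp.add_apply] <;> ring
  map_smul' r x := by
    ext i
    by_cases h : i = a <;> simp [h, PiLp.smul_apply] <;> ring
  left_inv x := by ext i; by_cases h : i = a <;> simp [h]
  right_inv x := by ext i; by_cases h : i = a <;> simp [h]
  norm_map' x := by
    simp only [EuclideanSpace.norm_eq]
    congr 1
    apply Finset.sum_congr rfl
    intro i _
    by_cases h : i = a <;> simp [h]

lemma negCoord_apply (a i : ι) (x : EuclideanSpace ℝ ι) :
    negCoord a x i = if i = a then -x i else x i := rfl

lemma ball_int_comp (e : EuclideanSpace ℝ ι ≃ₗᵢ[ℝ] EuclideanSpace ℝ ι)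
    (f : EuclideanSpace ℝ ι → ℝ) :
    ∫ x in ball (0 : EuclideanSpace ℝ ι) 1, f (e x)
      = ∫ x in ball (0 : EuclideanSpace ℝ ι) 1, f x := by
  have h := e.measurePreserving.setIntegral_preimage_emb
    e.toHomeomorph.measurableEmbedding f (ball 0 1)
  rwa [e.preimage_ball, map_zero] at h

variable [Nonempty ι]

lemma euclidean_nontrivial : Nontrivial (EuclideanSpace ℝ ι) := by
  refine nontrivial_of_ne (EuclideanSpace.single (Classical.arbitrary ι) 1) 0 fun h => ?_
  have := congrArg norm h
  rw [EuclideanSpace.norm_single, norm_zero] at this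
  simpa using this

lemma sphere_integrable {E : Type*} [NormedAddCommGroup E] [NormedSpace ℝ E]
    [FiniteDimensional ℝ E] [MeasurableSpace E] [BorelSpace E]
    (ν : Measure (sphere (0 : E) 1)) [IsFiniteMeasure ν]
    {f : (sphere (0 : E) 1) → ℝ} (hf : Continuous f) : Integrable f ν :=
  hf.integrable_of_hasCompactSupport (HasCompactSupport.of_compactSpace f)

lemma coord_continuous (a : ι) :
    Continuous (fun y : sphere (0 : EuclideanSpace ℝ ι) 1 => (y : EuclideanSpace ℝ ι) a) :=
  (EuclideanSpace.proj (𝕜 := ℝ) a).continuous.comp continuous_subtype_val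

set_option maxHeartbeats 1000000 in
lemma integral_sphere_sq (a : ι) :
    (∫ y : sphere (0 : EuclideanSpace ℝ ι) 1,
        ((y : EuclideanSpace ℝ ι) a * (y : EuclideanSpace ℝ ι) a)
        ∂(volume : Measure (EuclideanSpace ℝ ι)).toSphere)
      = (volume (ball (0 : EuclideanSpace ℝ ι) 1)).toReal := by
  haveI := euclidean_nontrivial (ι := ι)
  have hTeq : ∀ c d : ι, (∫ y : sphere (0 : EuclideanSpace ℝ ι) 1,
        ((y : EuclideanSpace ℝ ι) c * (y : EuclideanSpace ℝ ι) c)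
        ∂(volume : Measure (EuclideanSpace ℝ ι)).toSphere)
      = ∫ y : sphere (0 : EuclideanSpace ℝ ι) 1,
        ((y : EuclideanSpace ℝ ι) d * (y : EuclideanSpace ℝ ι) d)
        ∂(volume : Measure (EuclideanSpace ℝ ι)).toSphere := by
    intro c d
    rw [sphere_int_eq volume (fun x : EuclideanSpace ℝ ι => x c * x c),
      sphere_int_eq volume (fun x : EuclideanSpace ℝ ι => x d * x d)]
    congr 1
    have key := ball_int_comp (LinearIsometryEquiv.piLpCongrLeft 2 ℝ ℝ (Equiv.swap c d))
      (fun x : EuclideanSpace ℝ ι => (‖x‖⁻¹ • x) d * (‖x‖⁻¹ • x) d)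
    rw [← key]
    apply setIntegral_congr_fun measurableSet_ball
    intro x _
    have h1 : ((LinearIsometryEquiv.piLpCongrLeft 2 ℝ ℝ (Equiv.swap c d)) x) d = x c := by
      rw [LinearIsometryEquiv.piLpCongrLeft_apply]
      rw [Equiv.piCongrLeft'_apply, Equiv.symm_swap, Equiv.swap_apply_right]
    simp only [LinearIsometryEquiv.norm_map, PiLp.smul_apply, smul_eq_mul, h1]
  have hcard : (0:ℝ) < Fintype.card ι := by
    have := Fintype.card_pos (α := ι); positivity
  have hsum : ∑ c, (∫ y : sphere (0 : EuclideanSpace ℝ ι) 1,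
        ((y : EuclideanSpace ℝ ι) c * (y : EuclideanSpace ℝ ι) c)
        ∂(volume : Measure (EuclideanSpace ℝ ι)).toSphere)
      = (Fintype.card ι : ℝ) * (volume (ball (0 : EuclideanSpace ℝ ι) 1)).toReal := by
    rw [← integral_finset_sum _ (fun c _ => sphere_integrable _
      (((coord_continuous c).mul (coord_continuous c))))]
    have hone : ∀ y : sphere (0 : EuclideanSpace ℝ ι) 1,
        ∑ c, ((y : EuclideanSpace ℝ ι) c * (y : EuclideanSpace ℝ ι) c) = 1 := by
      intro y
      have hy : ‖(y : EuclideanSpace ℝ ι)‖ = 1 := by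
        simpa using mem_sphere_zero_iff_norm.mp y.2
      have h2 := EuclideanSpace.norm_eq (y : EuclideanSpace ℝ ι)
      rw [hy] at h2
      have h3 : ∑ i, ‖(y : EuclideanSpace ℝ ι) i‖^2 = 1 := by
        nlinarith [Real.sq_sqrt (show (0:ℝ) ≤ ∑ i, ‖(y : EuclideanSpace ℝ ι) i‖^2 by positivity)]
      calc ∑ c, ((y : EuclideanSpace ℝ ι) c * (y : EuclideanSpace ℝ ι) c)
            = ∑ c, ‖(y : EuclideanSpace ℝ ι) c‖^2 := by
            apply Finset.sum_congr rfl; intro c _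
            rw [Real.norm_eq_abs, sq_abs, pow_two]
        _ = 1 := h3
    rw [integral_congr_ae (Filter.Eventually.of_forall hone), integral_const]
    rw [measureReal_def, Measure.toSphere_apply_univ, finrank_euclideanSpace, ENNReal.toReal_mul,
      ENNReal.toReal_natCast]
    simp
  have h4 : (Fintype.card ι : ℝ) * (∫ y : sphere (0 : EuclideanSpace ℝ ι) 1,
        ((y : EuclideanSpace ℝ ι) a * (y : EuclideanSpace ℝ ι) a)
        ∂(volume : Measure (EuclideanSpace ℝ ι)).toSphere)
      = (Fintype.card ι : ℝ) * (volume (ball (0 : EuclideanSpace ℝ ι) 1)).toReal := by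
    rw [← hsum, Finset.sum_congr rfl (fun c _ => hTeq c a), Finset.sum_const,
      Finset.card_univ, nsmul_eq_mul]
  exact mul_left_cancel₀ (ne_of_gt hcard) h4

set_option maxHeartbeats 1000000 in
lemma integral_sphere_coord_mul (a b : ι) :
    (∫ y : sphere (0 : EuclideanSpace ℝ ι) 1,
        ((y : EuclideanSpace ℝ ι) a * (y : EuclideanSpace ℝ ι) b)
        ∂(volume : Measure (EuclideanSpace ℝ ι)).toSphere)
      = if a = b then (volume (ball (0 : EuclideanSpace ℝ ι) 1)).toReal else 0 := by
  haveI := euclidean_nontrivial (ι := ι)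
  rcases eq_or_ne a b with rfl | hab
  · rw [if_pos rfl]; exact integral_sphere_sq a
  · rw [if_neg hab]
    rw [sphere_int_eq volume (fun x : EuclideanSpace ℝ ι => x a * x b)]
    have key := ball_int_comp (negCoord a)
      (fun x : EuclideanSpace ℝ ι => (‖x‖⁻¹ • x) a * (‖x‖⁻¹ • x) b)
    have hfe : (∫ x in ball (0 : EuclideanSpace ℝ ι) 1,
          ((‖negCoord a x‖⁻¹ • negCoord a x) a * (‖negCoord a x‖⁻¹ • negCoord a x) b))
        = ∫ x in ball (0 : EuclideanSpace ℝ ι) 1,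
          -((‖x‖⁻¹ • x) a * (‖x‖⁻¹ • x) b) := by
      apply setIntegral_congr_fun measurableSet_ball
      intro x _
      simp only [LinearIsometryEquiv.norm_map, PiLp.smul_apply, smul_eq_mul, negCoord_apply,
        eq_self_iff_true, if_true, if_neg (Ne.symm hab)]
      ring
    rw [hfe, integral_neg] at key
    have h0 : ∫ x in ball (0 : EuclideanSpace ℝ ι) 1,
        ((‖x‖⁻¹ • x) a * (‖x‖⁻¹ • x) b) = 0 := by linarith
    rw [h0, mul_zero]

open MeasureTheory Metric Set

variable {ι : Type*} [Fintype ι] [DecidableEq ι]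

lemma norm_sum_sq (β : ι → ℂ) (x : ι → ℝ) :
    ‖∑ a, β a * (x a : ℂ)‖^2
      = ∑ a, ∑ b, ((β a) * (starRingEnd ℂ) (β b)).re * (x a * x b) := by
  rw [Complex.sq_norm, Complex.normSq_apply, Complex.re_sum, Complex.im_sum]
  have hre : ∀ a, (β a * (x a : ℂ)).re = (β a).re * x a := by
    intro a; simp [Complex.mul_re]
  have him : ∀ a, (β a * (x a : ℂ)).im = (β a).im * x a := by
    intro a; simp [Complex.mul_im]
  simp only [hre, him]
  rw [Finset.sum_mul_sum, Finset.sum_mul_sum, ← Finset.sum_add_distrib]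
  apply Finset.sum_congr rfl
  intro a _
  rw [← Finset.sum_add_distrib]
  apply Finset.sum_congr rfl
  intro b _
  simp only [Complex.mul_re, Complex.conj_re, Complex.conj_im]
  ring

variable [Nonempty ι]

set_option maxHeartbeats 1000000 in
lemma integral_sphere_norm_sum_sq (β : ι → ℂ) :
    (∫ y : sphere (0 : EuclideanSpace ℝ ι) 1,
        ‖∑ a, β a * (((y : EuclideanSpace ℝ ι) a : ℝ) : ℂ)‖^2
        ∂(volume : Measure (EuclideanSpace ℝ ι)).toSphere)
      = (∑ a, ‖β a‖^2) * (volume (ball (0 : EuclideanSpace ℝ ι) 1)).toReal := by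
  have hpt : ∀ y : sphere (0 : EuclideanSpace ℝ ι) 1,
      ‖∑ a, β a * (((y : EuclideanSpace ℝ ι) a : ℝ) : ℂ)‖^2
        = ∑ a, ∑ b, ((β a) * (starRingEnd ℂ) (β b)).re
            * ((y : EuclideanSpace ℝ ι) a * (y : EuclideanSpace ℝ ι) b) :=
    fun y => norm_sum_sq β (fun a => (y : EuclideanSpace ℝ ι) a)
  rw [integral_congr_ae (Filter.Eventually.of_forall hpt)]
  have hint : ∀ a b : ι, Integrable (fun y : sphere (0 : EuclideanSpace ℝ ι) 1 =>
      ((β a) * (starRingEnd ℂ) (β b)).re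
        * ((y : EuclideanSpace ℝ ι) a * (y : EuclideanSpace ℝ ι) b))
      (volume : Measure (EuclideanSpace ℝ ι)).toSphere :=
    fun a b => (sphere_integrable _ ((coord_continuous a).mul (coord_continuous b))).const_mul _
  rw [integral_finset_sum _ (fun a _ => integrable_finset_sum _ (fun b _ => hint a b))]
  have : ∀ a : ι, (∫ y : sphere (0 : EuclideanSpace ℝ ι) 1,
      ∑ b, ((β a) * (starRingEnd ℂ) (β b)).re
        * ((y : EuclideanSpace ℝ ι) a * (y : EuclideanSpace ℝ ι) b)
      ∂(volume : Measure (EuclideanSpace ℝ ι)).toSphere)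
      = ‖β a‖^2 * (volume (ball (0 : EuclideanSpace ℝ ι) 1)).toReal := by
    intro a
    rw [integral_finset_sum _ (fun b _ => hint a b)]
    have h1 : ∀ b : ι, (∫ y : sphere (0 : EuclideanSpace ℝ ι) 1,
        ((β a) * (starRingEnd ℂ) (β b)).re
          * ((y : EuclideanSpace ℝ ι) a * (y : EuclideanSpace ℝ ι) b)
        ∂(volume : Measure (EuclideanSpace ℝ ι)).toSphere)
        = ((β a) * (starRingEnd ℂ) (β b)).re
          * (if a = b then (volume (ball (0 : EuclideanSpace ℝ ι) 1)).toReal else 0) := by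
      intro b
      rw [MeasureTheory.integral_const_mul, integral_sphere_coord_mul]
    rw [Finset.sum_congr rfl (fun b _ => h1 b)]
    rw [Finset.sum_congr rfl (fun b _ => mul_ite _ _ _ _)]
    simp only [mul_zero]
    rw [Finset.sum_ite_eq _ a (fun b => ((β a) * (starRingEnd ℂ) (β b)).re
      * (volume (ball (0 : EuclideanSpace ℝ ι) 1)).toReal), if_pos (Finset.mem_univ a)]
    congr 1
    rw [Complex.mul_conj]
    rw [Complex.normSq_eq_norm_sq, Complex.ofReal_re]
  rw [Finset.sum_congr rfl (fun a _ => this a), ← Finset.sum_mul]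

open MeasureTheory Metric Set

lemma inner_eval (n : ℕ) (u v : EuclideanSpace ℂ (Fin n))
    (x : EuclideanSpace ℝ ((Fin n × Fin n) × Fin 2)) :
    (inner ℂ u (Matrix.toEuclideanLin
        (Matrix.of fun i j => ((x ((i,j),0) : ℝ) : ℂ) + (x ((i,j),1) : ℝ) * Complex.I) v) : ℂ)
    = ∑ a : (Fin n × Fin n) × Fin 2,
        ((starRingEnd ℂ) (u a.1.1) * v a.1.2 * (if a.2 = (0 : Fin 2) then 1 else Complex.I))
          * ((x a : ℝ) : ℂ) := by
  rw [Fintype.sum_prod_type]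
  simp only [Fin.sum_univ_two]
  rw [Fintype.sum_prod_type]
  simp only [PiLp.inner_apply, RCLike.inner_apply]
  have hw : ∀ i, (Matrix.toEuclideanLin
      (Matrix.of fun i j => ((x ((i,j),0) : ℝ) : ℂ) + (x ((i,j),1) : ℝ) * Complex.I) v) i
      = ∑ j, (((x ((i,j),0) : ℝ) : ℂ) + (x ((i,j),1) : ℝ) * Complex.I) * v j := by
    intro i
    rw [Matrix.toEuclideanLin_apply]
    simp [Matrix.mulVec, dotProduct]
  simp only [hw, Finset.mul_sum, Finset.sum_mul]
  apply Finset.sum_congr rfl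
  intro i _
  apply Finset.sum_congr rfl
  intro j _
  norm_num
  ring

open MeasureTheory Matrix Metric

set_option maxHeartbeats 1000000 in
/-- **Average eigenvalue condition number.**
Let `u, v ∈ ℂ^n` with `⟨u, v⟩ ≠ 0` and consider the functional
`DG₂(Ȧ) = ⟨u, Ȧ v⟩ / ⟨u, v⟩` on `M_n(ℂ)`, viewed as a real-linear map from the
`2n²`-dimensional real inner product space `M_n(ℂ)` (real part of the Frobenius
Hermitian inner product, identified with `ℝ^{2n²}` via real and imaginary parts
of the entries) to `ℂ ≅ ℝ²`.  Its average condition number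
`κ_av = [(1/vol S^{2n²-1}) ∫_{S^{2n²-1}} ‖DG₂‖²]^{1/2}` equals
`(1/n) · ‖u‖ · ‖v‖ / |⟨u, v⟩|`, i.e. `κ_av₂(A, λ) = κ₂(A, λ)/n`. -/
theorem stmt_12 (n : ℕ) (hn : 1 ≤ n) (u v : EuclideanSpace ℂ (Fin n))
    (huv : (inner ℂ u v : ℂ) ≠ 0) :
    Real.sqrt
        ((1 / ((volume : Measure (EuclideanSpace ℝ ((Fin n × Fin n) × Fin 2))).toSphere
            Set.univ).toReal) *
          ∫ x : sphere (0 : EuclideanSpace ℝ ((Fin n × Fin n) × Fin 2)) 1,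
            ‖(inner ℂ u (Matrix.toEuclideanLin
                (Matrix.of fun i j =>
                  ((x : EuclideanSpace ℝ ((Fin n × Fin n) × Fin 2)) ((i, j), 0) : ℂ) +
                    (x : EuclideanSpace ℝ ((Fin n × Fin n) × Fin 2)) ((i, j), 1) * Complex.I) v) : ℂ) /
              (inner ℂ u v : ℂ)‖ ^ 2
            ∂(volume : Measure (EuclideanSpace ℝ ((Fin n × Fin n) × Fin 2))).toSphere)
      = (1 / n) * (‖u‖ * ‖v‖ / ‖(inner ℂ u v : ℂ)‖) := by
  haveI : NeZero n := ⟨by omega⟩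
  set c : ℂ := inner ℂ u v with hc
  set β : ((Fin n × Fin n) × Fin 2) → ℂ := fun a =>
    ((starRingEnd ℂ) (u a.1.1) * v a.1.2 * (if a.2 = (0 : Fin 2) then 1 else Complex.I)) / c
    with hβ
  have hpt : ∀ x : sphere (0 : EuclideanSpace ℝ ((Fin n × Fin n) × Fin 2)) 1,
      ‖(inner ℂ u (Matrix.toEuclideanLin
            (Matrix.of fun i j =>
              ((x : EuclideanSpace ℝ ((Fin n × Fin n) × Fin 2)) ((i, j), 0) : ℂ) +
                (x : EuclideanSpace ℝ ((Fin n × Fin n) × Fin 2)) ((i, j), 1) * Complex.I) v) : ℂ) /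
          (inner ℂ u v : ℂ)‖ ^ 2
        = ‖∑ a, β a * (((x : EuclideanSpace ℝ ((Fin n × Fin n) × Fin 2)) a : ℝ) : ℂ)‖ ^ 2 := by
    intro x
    rw [inner_eval n u v]
    congr 2
    rw [Finset.sum_div]
    apply Finset.sum_congr rfl
    intro a _
    rw [hβ]
    ring
  rw [integral_congr_ae (Filter.Eventually.of_forall hpt),
    integral_sphere_norm_sum_sq β]
  -- compute the sum of squared norms
  have hnu : ∑ i, ‖u i‖ ^ 2 = ‖u‖ ^ 2 := by
    rw [EuclideanSpace.norm_eq u, Real.sq_sqrt (by positivity)]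
  have hnv : ∑ j, ‖v j‖ ^ 2 = ‖v‖ ^ 2 := by
    rw [EuclideanSpace.norm_eq v, Real.sq_sqrt (by positivity)]
  have hS : ∑ a, ‖β a‖ ^ 2 = 2 * ‖u‖ ^ 2 * ‖v‖ ^ 2 / ‖c‖ ^ 2 := by
    rw [Fintype.sum_prod_type]
    have : ∀ p : Fin n × Fin n, ∑ t : Fin 2, ‖β (p, t)‖ ^ 2
        = 2 * (‖u p.1‖ ^ 2 * ‖v p.2‖ ^ 2) / ‖c‖ ^ 2 := by
      intro p
      rw [Fin.sum_univ_two]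
      rw [hβ]
      simp only [if_pos rfl, if_neg (by decide : (1 : Fin 2) ≠ 0), mul_one,
        norm_div, norm_mul, Complex.norm_I, RCLike.norm_conj, if_true, eq_self_iff_true,
        norm_one]
      ring
    rw [Finset.sum_congr rfl (fun p _ => this p)]
    rw [← Finset.sum_div]
    rw [show ∑ p : Fin n × Fin n, 2 * (‖u p.1‖ ^ 2 * ‖v p.2‖ ^ 2)
        = 2 * ((∑ i, ‖u i‖ ^ 2) * (∑ j, ‖v j‖ ^ 2)) by
      rw [Finset.sum_mul_sum, ← Finset.mul_sum, Fintype.sum_prod_type]]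
    rw [hnu, hnv]
    ring
  rw [hS]
  -- the measure of the sphere
  have hV0 : (volume (ball (0 : EuclideanSpace ℝ ((Fin n × Fin n) × Fin 2)) 1)).toReal ≠ 0 := by
    have h1 := measure_ball_pos volume (0 : EuclideanSpace ℝ ((Fin n × Fin n) × Fin 2)) one_pos
    have h2 : volume (ball (0 : EuclideanSpace ℝ ((Fin n × Fin n) × Fin 2)) 1) ≠ ⊤ :=
      measure_ball_lt_top.ne
    simp [ENNReal.toReal_eq_zero_iff, h1.ne', h2]
  have hsph : ((volume : Measure (EuclideanSpace ℝ ((Fin n × Fin n) × Fin 2))).toSphere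
      Set.univ).toReal = (n * n * 2 : ℝ)
        * (volume (ball (0 : EuclideanSpace ℝ ((Fin n × Fin n) × Fin 2)) 1)).toReal := by
    rw [Measure.toSphere_apply_univ, finrank_euclideanSpace, ENNReal.toReal_mul,
      ENNReal.toReal_natCast]
    simp [Fintype.card_prod, Fintype.card_fin]
  rw [hsph]
  have hcn : ‖c‖ ≠ 0 := norm_ne_zero_iff.mpr huv
  have hnn : (n : ℝ) ≠ 0 := Nat.cast_ne_zero.mpr (by omega)
  have hgoal : (1 / ((n * n * 2 : ℝ)
        * (volume (ball (0 : EuclideanSpace ℝ ((Fin n × Fin n) × Fin 2)) 1)).toReal))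
      * (2 * ‖u‖ ^ 2 * ‖v‖ ^ 2 / ‖c‖ ^ 2
        * (volume (ball (0 : EuclideanSpace ℝ ((Fin n × Fin n) × Fin 2)) 1)).toReal)
      = ((1 / n) * (‖u‖ * ‖v‖ / ‖c‖)) ^ 2 := by
    field_simp
  rw [hgoal, Real.sqrt_sq (by positivity)]
end

section
/- Let A ∈ M_n(ℂ), let λ ∈ ℂ and v ∈ ℂ^n with ‖v‖ = 1 and Av = λv, and suppose the operator S₀ = π_{v⊥} ∘ (λI − A)|_{v⊥} : v⊥ → v⊥ is invertible, where π_{v⊥} is the orthogonal projection of ℂ^n onto the orthogonal complement v⊥ of v. Consider the linear map DG₁ : M_n(ℂ) → v⊥ given by DG₁(Ȧ) = S₀^{-1}(π_{v⊥}(Ȧ v)), where M_n(ℂ) carries the Frobenius Hermitian inner product. Then the operator norm of DG₁ equals ‖S₀^{-1}‖, the operator norm of S₀^{-1}. -/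
open Matrix

set_option maxHeartbeats 800000 in
private lemma aux_norm_attain (n : ℕ) (W : Submodule ℂ (EuclideanSpace ℂ (Fin n)))
    [Nontrivial W] (B : W →L[ℂ] W) :
    ∃ u : W, ‖u‖ = 1 ∧ ‖B u‖ = ‖B‖ := by
  obtain ⟨u₀, hu₀, hmax⟩ := (isCompact_sphere (0:W) 1).exists_isMaxOn
    (NormedSpace.sphere_nonempty.mpr zero_le_one)
    (B.continuous.norm.continuousOn)
  rw [mem_sphere_zero_iff_norm] at hu₀
  have h1 := B.le_opNorm u₀
  rw [hu₀, mul_one] at h1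
  refine ⟨u₀, hu₀, le_antisymm h1 ?_⟩
  refine B.opNorm_le_bound (norm_nonneg _) fun x => ?_
  rcases eq_or_ne x 0 with rfl | hx
  · rw [map_zero, norm_zero, mul_zero]
  · have hxpos : (0:ℝ) < ‖x‖ := norm_pos_iff.mpr hx
    have hs : ((‖x‖⁻¹ : ℂ) • x) ∈ Metric.sphere (0:W) 1 := by
      rw [mem_sphere_zero_iff_norm, norm_smul, norm_inv, Complex.norm_real,
        Real.norm_eq_abs, abs_of_nonneg (norm_nonneg x),
        inv_mul_cancel₀ (ne_of_gt hxpos)]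
    have h2 : ‖B ((‖x‖⁻¹ : ℂ) • x)‖ ≤ ‖B u₀‖ := hmax hs
    rw [_root_.map_smul, norm_smul, norm_inv, Complex.norm_real, Real.norm_eq_abs,
      abs_of_nonneg (norm_nonneg x)] at h2
    calc ‖B x‖ = ‖x‖ * (‖x‖⁻¹ * ‖B x‖) := by rw [← mul_assoc, mul_inv_cancel₀ hxpos.ne', one_mul]
    _ ≤ ‖x‖ * ‖B u₀‖ := by nlinarith [h2]
    _ = ‖B u₀‖ * ‖x‖ := mul_comm _ _

private lemma aux_rank_one_apply (n : ℕ) (v w : EuclideanSpace ℂ (Fin n)) (hv : ‖v‖ = 1) :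
    Matrix.toEuclideanLin (Matrix.of fun i j => w i * (starRingEnd ℂ) (v j)) v = w := by
  have hvv : ∑ j, (starRingEnd ℂ) (v j) * v j = 1 := by
    have := @inner_self_eq_norm_sq_to_K ℂ _ _ _ _ v
    rw [PiLp.inner_apply] at this
    simp only [RCLike.inner_apply] at this
    rw [Finset.sum_congr rfl (fun j _ => mul_comm ((starRingEnd ℂ) (v j)) (v j)), this, hv]
    norm_num
  ext i
  rw [toEuclideanLin_apply]
  simp only [PiLp.toLp_apply, mulVec, dotProduct, of_apply]
  calc ∑ j, w i * (starRingEnd ℂ) (v j) * v j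
      = w i * ∑ j, (starRingEnd ℂ) (v j) * v j := by rw [Finset.mul_sum]; simp_rw [mul_assoc]
    _ = w i := by rw [hvv, mul_one]

private lemma aux_rank_one_frobenius (n : ℕ) (v w : EuclideanSpace ℂ (Fin n))
    (hv : ‖v‖ = 1) (hw : ‖w‖ = 1) :
    Real.sqrt (∑ i, ∑ j, ‖(Matrix.of fun i j => w i * (starRingEnd ℂ) (v j)) i j‖ ^ 2) = 1 := by
  have h1 : ∀ u : EuclideanSpace ℂ (Fin n), ‖u‖ = 1 → ∑ i, ‖u i‖ ^ 2 = 1 := by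
    intro u hu
    have := EuclideanSpace.norm_eq u
    rw [hu] at this
    have h2 : (0:ℝ) ≤ ∑ i, ‖u i‖ ^ 2 := Finset.sum_nonneg fun _ _ => sq_nonneg _
    nlinarith [Real.sq_sqrt h2, Real.sqrt_nonneg (∑ i, ‖u i‖ ^ 2)]
  have : ∑ i, ∑ j, ‖(Matrix.of fun i j => w i * (starRingEnd ℂ) (v j)) i j‖ ^ 2 = 1 := by
    simp only [of_apply, norm_mul, mul_pow, RingHomIsometric.norm_map, ← Finset.mul_sum]
    rw [← Finset.sum_mul, h1 v hv, h1 w hw, one_mul]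
  rw [this, Real.sqrt_one]

private lemma aux_apply_le (n : ℕ) (v : EuclideanSpace ℂ (Fin n)) (hv : ‖v‖ = 1)
    (dA : Matrix (Fin n) (Fin n) ℂ) :
    ‖Matrix.toEuclideanLin dA v‖ ≤ Real.sqrt (∑ i, ∑ j, ‖dA i j‖ ^ 2) := by
  rw [EuclideanSpace.norm_eq]
  apply Real.sqrt_le_sqrt
  apply Finset.sum_le_sum
  intro i _
  have key : ‖(Matrix.toEuclideanLin dA v) i‖ ≤ Real.sqrt (∑ j, ‖dA i j‖ ^ 2) := by
    set x : EuclideanSpace ℂ (Fin n) :=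
      (WithLp.equiv 2 (Fin n → ℂ)).symm (fun j => (starRingEnd ℂ) (dA i j)) with hxdef
    have hinner : (inner ℂ x v : ℂ) = (Matrix.toEuclideanLin dA v) i := by
      rw [PiLp.inner_apply, toEuclideanLin_apply]
      simp [hxdef, mulVec, dotProduct, mul_comm]
    have hxnorm : ‖x‖ = Real.sqrt (∑ j, ‖dA i j‖ ^ 2) := by
      rw [EuclideanSpace.norm_eq]
      congr 1
      apply Finset.sum_congr rfl
      intro j _
      simp [hxdef]
    calc ‖(Matrix.toEuclideanLin dA v) i‖ = ‖(inner ℂ x v : ℂ)‖ := by rw [hinner]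
      _ ≤ ‖x‖ * ‖v‖ := norm_inner_le_norm x v
      _ = Real.sqrt (∑ j, ‖dA i j‖ ^ 2) := by rw [hv, hxnorm, mul_one]
  have h0 : (0:ℝ) ≤ ∑ j, ‖dA i j‖ ^ 2 := Finset.sum_nonneg fun _ _ => sq_nonneg _
  calc ‖(Matrix.toEuclideanLin dA v) i‖ ^ 2 ≤ Real.sqrt (∑ j, ‖dA i j‖ ^ 2) ^ 2 :=
        pow_le_pow_left₀ (norm_nonneg _) key 2
    _ = ∑ j, ‖dA i j‖ ^ 2 := Real.sq_sqrt h0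

set_option maxHeartbeats 1000000 in
/-- **The eigenvector condition number.** -/
theorem stmt_13 (n : ℕ) (hn : 1 ≤ n) (A : Matrix (Fin n) (Fin n) ℂ)
    (lam : ℂ) (v : EuclideanSpace ℂ (Fin n)) (hv : ‖v‖ = 1)
    (hAv : Matrix.toEuclideanLin A v = lam • v)
    (S : (ℂ ∙ v)ᗮ ≃ₗ[ℂ] (ℂ ∙ v)ᗮ)
    (hS : ∀ w : (ℂ ∙ v)ᗮ,
      S w = Submodule.orthogonalProjectionOnto (ℂ ∙ v)ᗮ (lam • (w : EuclideanSpace ℂ (Fin n)) -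
        Matrix.toEuclideanLin A w)) :
    IsGreatest
      {c : ℝ | ∃ dA : Matrix (Fin n) (Fin n) ℂ,
        Real.sqrt (∑ i, ∑ j, ‖dA i j‖ ^ 2) = 1 ∧
        c = ‖S.symm (Submodule.orthogonalProjectionOnto (ℂ ∙ v)ᗮ (Matrix.toEuclideanLin dA v))‖}
      ‖LinearMap.toContinuousLinearMap (S.symm : (ℂ ∙ v)ᗮ →ₗ[ℂ] (ℂ ∙ v)ᗮ)‖ := by
  set B := LinearMap.toContinuousLinearMap (S.symm : (ℂ ∙ v)ᗮ →ₗ[ℂ] (ℂ ∙ v)ᗮ) with hB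
  have hBapp : ∀ x : (ℂ ∙ v)ᗮ, B x = S.symm x := fun x => rfl
  clear_value B
  constructor
  · -- membership: the norm is attained
    have : ∃ w : EuclideanSpace ℂ (Fin n), ‖w‖ = 1 ∧
        ‖S.symm (Submodule.orthogonalProjectionOnto (ℂ ∙ v)ᗮ w)‖ = ‖B‖ := by
      by_cases hK : Subsingleton (ℂ ∙ v)ᗮ
      · refine ⟨v, hv, ?_⟩
        have hB0 : ‖B‖ = 0 := by
          refine le_antisymm (B.opNorm_le_bound le_rfl fun x => ?_) (norm_nonneg _)
          rw [Subsingleton.elim (B x) 0, norm_zero, zero_mul]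
        rw [hB0, Subsingleton.elim (S.symm (Submodule.orthogonalProjectionOnto (ℂ ∙ v)ᗮ v)) 0, norm_zero]
      · have : Nontrivial (ℂ ∙ v)ᗮ := not_subsingleton_iff_nontrivial.mp hK
        obtain ⟨u, hu1, huB⟩ := aux_norm_attain n (ℂ ∙ v)ᗮ B
        refine ⟨(u : EuclideanSpace ℂ (Fin n)), hu1, ?_⟩
        have hproj : Submodule.orthogonalProjectionOnto (ℂ ∙ v)ᗮ ((u : EuclideanSpace ℂ (Fin n))) = u :=
          Submodule.orthogonalProjectionOnto_mem_subspace_eq_self u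
        rw [hproj, ← hBapp, huB]
    obtain ⟨w, hw1, hwB⟩ := this
    refine ⟨Matrix.of fun i j => w i * (starRingEnd ℂ) (v j),
      aux_rank_one_frobenius n v w hv hw1, ?_⟩
    rw [aux_rank_one_apply n v w hv, hwB]
  · -- upper bound
    rintro c ⟨dA, hF, rfl⟩
    have hπ : ‖(Submodule.orthogonalProjectionOnto (ℂ ∙ v)ᗮ (Matrix.toEuclideanLin dA v) : (ℂ ∙ v)ᗮ)‖ ≤
        ‖Matrix.toEuclideanLin dA v‖ := by
      calc ‖(Submodule.orthogonalProjectionOnto (ℂ ∙ v)ᗮ (Matrix.toEuclideanLin dA v) : (ℂ ∙ v)ᗮ)‖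
          ≤ ‖Submodule.orthogonalProjectionOnto (ℂ ∙ v)ᗮ‖ * ‖Matrix.toEuclideanLin dA v‖ :=
            (Submodule.orthogonalProjectionOnto (ℂ ∙ v)ᗮ).le_opNorm _
        _ ≤ 1 * ‖Matrix.toEuclideanLin dA v‖ :=
            mul_le_mul_of_nonneg_right (Submodule.orthogonalProjectionOnto_norm_le (ℂ ∙ v)ᗮ) (norm_nonneg _)
        _ = ‖Matrix.toEuclideanLin dA v‖ := one_mul _
    calc ‖S.symm (Submodule.orthogonalProjectionOnto (ℂ ∙ v)ᗮ (Matrix.toEuclideanLin dA v))‖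
        = ‖B (Submodule.orthogonalProjectionOnto (ℂ ∙ v)ᗮ (Matrix.toEuclideanLin dA v))‖ := by rw [hBapp]
      _ ≤ ‖B‖ * ‖(Submodule.orthogonalProjectionOnto (ℂ ∙ v)ᗮ (Matrix.toEuclideanLin dA v) : (ℂ ∙ v)ᗮ)‖ :=
            B.le_opNorm _
      _ ≤ ‖B‖ * ‖Matrix.toEuclideanLin dA v‖ :=
            mul_le_mul_of_nonneg_left hπ (norm_nonneg _)
      _ ≤ ‖B‖ * Real.sqrt (∑ i, ∑ j, ‖dA i j‖ ^ 2) :=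
            mul_le_mul_of_nonneg_left (aux_apply_le n v hv dA) (norm_nonneg _)
      _ = ‖B‖ := by rw [hF, mul_one]
end

section
/- Let A be a k×p complex matrix of rank r (with r ≥ 1, r < p, r ≤ k), let B be the Moore–Penrose inverse of A (i.e. the unique p×k matrix with ABA = A, BAB = B, (AB)* = AB, (BA)* = BA), let ℓ = p − r, and let M be a p×ℓ complex matrix with M*M = I whose columns span the kernel of A. Consider the linear map Φ : M_{k,p}(ℂ) → M_{p,ℓ}(ℂ) given by Φ(Ȧ) = −B Ȧ M, where both spaces carry the Frobenius Hermitian inner product. Then the operator norm of Φ equals ‖B‖, the operator (spectral) norm of B; in particular the condition number of the kernel-finding problem is κ(A, M) = ‖A†‖. -/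
open Matrix


lemma dot_self' {n : ℕ} (w : Fin n → ℂ) : star w ⬝ᵥ w = ((∑ i, ‖w i‖ ^ 2 : ℝ) : ℂ) := by
  simp only [dotProduct, Pi.star_apply, RCLike.star_def]
  push_cast
  refine Finset.sum_congr rfl fun i _ => ?_
  rw [← Complex.normSq_eq_conj_mul_self, Complex.normSq_eq_norm_sq]
  push_cast; ring

lemma isom {p n : ℕ} (M : Matrix (Fin p) (Fin n) ℂ) (hM : Mᴴ * M = 1) (z : Fin n → ℂ) :
    ∑ t, ‖(M *ᵥ z) t‖ ^ 2 = ∑ j, ‖z j‖ ^ 2 := by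
  have h : star (M *ᵥ z) ⬝ᵥ (M *ᵥ z) = star z ⬝ᵥ z := by
    rw [star_mulVec, dotProduct_mulVec, vecMul_vecMul, hM, vecMul_one]
  rw [dot_self', dot_self'] at h
  exact_mod_cast h

lemma contr {p n : ℕ} (M : Matrix (Fin p) (Fin n) ℂ) (hM : Mᴴ * M = 1) (y : Fin p → ℂ) :
    ∑ j, ‖(Mᴴ *ᵥ y) j‖ ^ 2 ≤ ∑ t, ‖y t‖ ^ 2 := by
  set w : Fin n → ℂ := Mᴴ *ᵥ y with hw
  have key : ((∑ j, ‖w j‖ ^ 2 : ℝ) : ℂ) = star y ⬝ᵥ (M *ᵥ w) := by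
    rw [← dot_self', hw, star_mulVec, conjTranspose_conjTranspose, ← dotProduct_mulVec]
  have h1 : (∑ j, ‖w j‖ ^ 2) = ‖star y ⬝ᵥ (M *ᵥ w)‖ := by
    rw [← key, Complex.norm_real, Real.norm_of_nonneg (Finset.sum_nonneg fun _ _ => sq_nonneg _)]
  have h2 : ‖star y ⬝ᵥ (M *ᵥ w)‖ ≤ ∑ t, ‖y t‖ * ‖(M *ᵥ w) t‖ := by
    refine (norm_sum_le _ _).trans ?_
    refine Finset.sum_le_sum fun t _ => ?_
    rw [norm_mul]
    simp
  have h3 : ∑ t, ‖y t‖ * ‖(M *ᵥ w) t‖ ≤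
      Real.sqrt (∑ t, ‖y t‖ ^ 2) * Real.sqrt (∑ t, ‖(M *ᵥ w) t‖ ^ 2) :=
    Real.sum_mul_le_sqrt_mul_sqrt _ _ _
  rw [isom M hM w] at h3
  have h4 : (∑ j, ‖w j‖ ^ 2) ≤ Real.sqrt (∑ t, ‖y t‖ ^ 2) * Real.sqrt (∑ j, ‖w j‖ ^ 2) :=
    h1.trans_le (h2.trans h3)
  set a := Real.sqrt (∑ j, ‖w j‖ ^ 2) with ha
  set b := Real.sqrt (∑ t, ‖y t‖ ^ 2) with hb
  have hsw : (∑ j, ‖w j‖ ^ 2) = a ^ 2 :=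
    (Real.sq_sqrt (Finset.sum_nonneg fun _ _ => sq_nonneg _)).symm
  have hsy : (∑ t, ‖y t‖ ^ 2) = b ^ 2 :=
    (Real.sq_sqrt (Finset.sum_nonneg fun _ _ => sq_nonneg _)).symm
  have ha0 : 0 ≤ a := Real.sqrt_nonneg _
  have hb0 : 0 ≤ b := Real.sqrt_nonneg _
  rw [hsw, hsy]
  rw [hsw] at h4
  nlinarith [h4]

-- attainment
lemma attain {E F : Type*} [NormedAddCommGroup E] [NormedSpace ℂ E]
    [NormedAddCommGroup F] [NormedSpace ℂ F] [FiniteDimensional ℂ E] [Nontrivial E]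
    (f : E →L[ℂ] F) : ∃ x : E, ‖x‖ = 1 ∧ ‖f x‖ = ‖f‖ := by
  have hsph : (Metric.sphere (0 : E) 1).Nonempty :=
    NormedSpace.sphere_nonempty.2 zero_le_one
  have hc : IsCompact (Metric.sphere (0 : E) 1) := isCompact_sphere _ _
  obtain ⟨x, hx, hmax⟩ := hc.exists_isMaxOn hsph
    ((continuous_norm.comp f.continuous).continuousOn)
  have hx1 : ‖x‖ = 1 := mem_sphere_zero_iff_norm.mp hx
  refine ⟨x, hx1, le_antisymm (by simpa [hx1] using f.le_opNorm x) ?_⟩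
  refine f.opNorm_le_bound (norm_nonneg _) fun y => ?_
  rcases eq_or_ne y 0 with rfl | hy
  · simp
  · have hny : (0:ℝ) < ‖y‖ := norm_pos_iff.2 hy
    have hcn : ‖((‖y‖⁻¹ : ℝ) : ℂ)‖ = ‖y‖⁻¹ := by
      rw [Complex.norm_real, Real.norm_of_nonneg (inv_nonneg.2 hny.le)]
    have hmem : (((‖y‖⁻¹ : ℝ) : ℂ) • y) ∈ Metric.sphere (0 : E) 1 := by
      rw [mem_sphere_zero_iff_norm, norm_smul, hcn, inv_mul_cancel₀ hny.ne']
    have this : ‖f (((‖y‖⁻¹ : ℝ) : ℂ) • y)‖ ≤ ‖f x‖ := hmax hmem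
    rw [_root_.map_smul, norm_smul, hcn] at this
    calc ‖f y‖ = ‖y‖ * (‖y‖⁻¹ * ‖f y‖) := by field_simp
    _ ≤ ‖y‖ * ‖f x‖ := by
        exact mul_le_mul_of_nonneg_left this hny.le
    _ = ‖f x‖ * ‖y‖ := mul_comm _ _

-- sum-form opnorm bound
lemma opbound {k p : ℕ} (B : Matrix (Fin p) (Fin k) ℂ) (x : Fin k → ℂ) :
    ∑ i, ‖(B *ᵥ x) i‖ ^ 2 ≤
      ‖LinearMap.toContinuousLinearMap (Matrix.toEuclideanLin B)‖ ^ 2 * ∑ j, ‖x j‖ ^ 2 := by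
  set f := LinearMap.toContinuousLinearMap (Matrix.toEuclideanLin B) with hf
  set X : EuclideanSpace ℂ (Fin k) := (WithLp.equiv 2 _).symm x with hX
  have h1 : ‖f X‖ ≤ ‖f‖ * ‖X‖ := f.le_opNorm X
  have hfx : ‖f X‖ = Real.sqrt (∑ i, ‖(B *ᵥ x) i‖ ^ 2) := by
    rw [EuclideanSpace.norm_eq]
    rfl
  have hXn : ‖X‖ = Real.sqrt (∑ j, ‖x j‖ ^ 2) := by
    rw [EuclideanSpace.norm_eq]
    rfl
  rw [hfx, hXn] at h1
  have hs : Real.sqrt (∑ i, ‖(B *ᵥ x) i‖ ^ 2) * Real.sqrt (∑ i, ‖(B *ᵥ x) i‖ ^ 2)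
      = ∑ i, ‖(B *ᵥ x) i‖ ^ 2 :=
    Real.mul_self_sqrt (Finset.sum_nonneg fun _ _ => sq_nonneg _)
  have hs2 : Real.sqrt (∑ j, ‖x j‖ ^ 2) * Real.sqrt (∑ j, ‖x j‖ ^ 2) = ∑ j, ‖x j‖ ^ 2 :=
    Real.mul_self_sqrt (Finset.sum_nonneg fun _ _ => sq_nonneg _)
  have h2 := mul_self_le_mul_self (Real.sqrt_nonneg (∑ i, ‖(B *ᵥ x) i‖ ^ 2)) h1
  rw [hs] at h2
  calc ∑ i, ‖(B *ᵥ x) i‖ ^ 2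
      ≤ ‖f‖ * Real.sqrt (∑ j, ‖x j‖ ^ 2) * (‖f‖ * Real.sqrt (∑ j, ‖x j‖ ^ 2)) := h2
    _ = ‖f‖ ^ 2 * (Real.sqrt (∑ j, ‖x j‖ ^ 2) * Real.sqrt (∑ j, ‖x j‖ ^ 2)) := by ring
    _ = ‖f‖ ^ 2 * ∑ j, ‖x j‖ ^ 2 := by rw [hs2]

/-- **Condition number of the kernel-finding problem.**
Let `A` be a `k×p` complex matrix of rank `r` (`1 ≤ r`, `r < p`, `r ≤ k`), `B`
its Moore–Penrose inverse (characterized by the four Penrose equations), and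
`M` a `p×(p-r)` matrix with orthonormal columns spanning `ker A`.  The operator
norm of the condition matrix `Φ(Ȧ) = -B Ȧ M` between the Frobenius Hermitian
inner product spaces `M_{k,p}(ℂ)` and `M_{p,p-r}(ℂ)` — i.e. the greatest value
of `‖Φ(Ȧ)‖_F` over matrices `Ȧ` of Frobenius norm 1 — equals the spectral
(operator) norm `‖B‖ = ‖A†‖`. -/
theorem stmt_14 (k p r : ℕ) (hr : 1 ≤ r) (hrp : r < p) (hrk : r ≤ k)
    (A : Matrix (Fin k) (Fin p) ℂ) (hrank : A.rank = r)
    (B : Matrix (Fin p) (Fin k) ℂ)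
    (hB1 : A * B * A = A) (hB2 : B * A * B = B)
    (hB3 : (A * B)ᴴ = A * B) (hB4 : (B * A)ᴴ = B * A)
    (M : Matrix (Fin p) (Fin (p - r)) ℂ) (hM : Mᴴ * M = 1)
    (hker : Submodule.span ℂ (Set.range Mᵀ) = LinearMap.ker A.mulVecLin) :
    IsGreatest
      {c : ℝ | ∃ dA : Matrix (Fin k) (Fin p) ℂ,
        Real.sqrt (∑ i, ∑ j, ‖dA i j‖ ^ 2) = 1 ∧
        c = Real.sqrt (∑ i, ∑ j, ‖(-(B * dA * M)) i j‖ ^ 2)}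
      ‖LinearMap.toContinuousLinearMap (Matrix.toEuclideanLin B)‖ := by
  haveI : NeZero (p - r) := ⟨(Nat.sub_pos_of_lt hrp).ne'⟩
  have hk : 0 < k := lt_of_lt_of_le hr hrk
  set f := LinearMap.toContinuousLinearMap (Matrix.toEuclideanLin B) with hf
  constructor
  · -- membership: the norm is attained
    haveI : Nontrivial (EuclideanSpace ℂ (Fin k)) :=
      ⟨EuclideanSpace.single ⟨0, hk⟩ 1, 0, fun h => one_ne_zero (α := ℂ) (by
        have h2 := congrArg (fun x => x ⟨0, hk⟩) h
        simp at h2)⟩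
    obtain ⟨v, hv, hfv⟩ := attain f
    set dA : Matrix (Fin k) (Fin p) ℂ := fun i j => v i * star (M j 0) with hdA
    have hv1 : ∑ i, ‖v i‖ ^ 2 = 1 := by
      have := hv
      rw [EuclideanSpace.norm_eq] at this
      exact Real.sqrt_eq_one.mp this
    have hM0 : ∑ j, ‖M j 0‖ ^ 2 = 1 := by
      have h00 : star (fun j => M j 0) ⬝ᵥ (fun j => M j 0) = 1 := by
        have := congrFun (congrFun hM 0) 0
        simpa [Matrix.mul_apply, Matrix.one_apply, dotProduct, conjTranspose_apply,
          mul_comm] using this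
      rw [dot_self'] at h00
      exact_mod_cast h00
    refine ⟨dA, ?_, ?_⟩
    · have : (∑ i, ∑ j, ‖dA i j‖ ^ 2) = 1 := by
        simp only [hdA, norm_mul, norm_star, mul_pow, ← Finset.mul_sum]
        rw [← Finset.sum_mul, hv1, hM0, one_mul]
      rw [this, Real.sqrt_one]
    · have key : ∀ i j, (B * dA * M) i j = (B *ᵥ (fun s => v s)) i * (Mᴴ * M) 0 j := by
        intro i j
        simp only [Matrix.mul_apply, mulVec, dotProduct, conjTranspose_apply,
          Finset.sum_mul, Finset.mul_sum, hdA]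
        exact Finset.sum_congr rfl fun s _ => by
          erw [Matrix.mul_apply, Finset.sum_mul]
          exact Finset.sum_congr rfl fun t _ => by ring
      have hfveq : ‖f v‖ = Real.sqrt (∑ i, ‖(B *ᵥ (fun s => v s)) i‖ ^ 2) := by
        rw [EuclideanSpace.norm_eq]; rfl
      have hsum : (∑ i, ∑ j, ‖(-(B * dA * M)) i j‖ ^ 2)
          = ∑ i, ‖(B *ᵥ (fun s => v s)) i‖ ^ 2 := by
        simp only [Matrix.neg_apply, norm_neg, key, hM, norm_mul, mul_pow]
        refine Finset.sum_congr rfl fun i _ => ?_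
        rw [← Finset.mul_sum]
        have : (∑ j, ‖(1 : Matrix (Fin (p - r)) (Fin (p - r)) ℂ) 0 j‖ ^ 2) = 1 := by
          simp [Matrix.one_apply, apply_ite]
        rw [this, mul_one]
      rw [hsum, ← hfveq, hfv]
  · -- upper bound
    rintro c ⟨dA, hdA, rfl⟩
    have hmulassoc : B * dA * M = B * (dA * M) := Matrix.mul_assoc _ _ _
    have hT : (∑ i, ∑ j, ‖(-(B * dA * M)) i j‖ ^ 2) ≤ ‖f‖ ^ 2 * 1 := by
      have hdA1 : (∑ i, ∑ j, ‖dA i j‖ ^ 2) = 1 := Real.sqrt_eq_one.mp hdA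
      calc (∑ i, ∑ j, ‖(-(B * dA * M)) i j‖ ^ 2)
          = ∑ j, ∑ i, ‖(B * (dA * M)) i j‖ ^ 2 := by
            simp only [Matrix.neg_apply, norm_neg, hmulassoc]
            exact Finset.sum_comm
        _ ≤ ∑ j, ‖f‖ ^ 2 * ∑ s, ‖(dA * M) s j‖ ^ 2 := by
            refine Finset.sum_le_sum fun j _ => ?_
            have : ∀ i, (B * (dA * M)) i j = (B *ᵥ (fun s => (dA * M) s j)) i := by
              intro i; simp [Matrix.mul_apply, mulVec, dotProduct]
            simp only [this]
            exact opbound B _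
        _ = ‖f‖ ^ 2 * ∑ s, ∑ j, ‖(dA * M) s j‖ ^ 2 := by
            rw [← Finset.mul_sum, Finset.sum_comm]
        _ ≤ ‖f‖ ^ 2 * ∑ s, ∑ t, ‖dA s t‖ ^ 2 := by
            refine mul_le_mul_of_nonneg_left ?_ (sq_nonneg _)
            refine Finset.sum_le_sum fun s _ => ?_
            have hent : ∀ j, ‖(dA * M) s j‖ = ‖(Mᴴ *ᵥ star (dA s)) j‖ := by
              intro j
              have : (Mᴴ *ᵥ star (dA s)) j = star ((dA * M) s j) := by
                simp [Matrix.mul_apply, mulVec, dotProduct, conjTranspose_apply,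
                  star_sum, mul_comm]
              rw [this, norm_star]
            simp only [hent]
            calc ∑ j, ‖(Mᴴ *ᵥ star (dA s)) j‖ ^ 2 ≤ ∑ t, ‖star (dA s) t‖ ^ 2 :=
                contr M hM _
              _ = ∑ t, ‖dA s t‖ ^ 2 := by simp
        _ = ‖f‖ ^ 2 * 1 := by rw [hdA1]
    rw [mul_one] at hT
    calc Real.sqrt (∑ i, ∑ j, ‖(-(B * dA * M)) i j‖ ^ 2)
        ≤ Real.sqrt (‖f‖ ^ 2) := Real.sqrt_le_sqrt hT
      _ = ‖f‖ := Real.sqrt_sq (norm_nonneg f)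
end

section
/- Let A be a k×p complex matrix of rank r (with r ≥ 1, r < p, r ≤ k), let B be the Moore–Penrose inverse of A, let ℓ = p − r, and let M be a p×ℓ complex matrix with M*M = I whose columns span the kernel of A. Consider the linear map Φ : M_{k,p}(ℂ) → M_{p,ℓ}(ℂ) given by Φ(Ȧ) = −B Ȧ M, where both spaces carry the Frobenius Hermitian inner product. Then the Frobenius (Hilbert–Schmidt) norm of Φ equals √(p − r) · ‖B‖_F, where ‖B‖_F is the Frobenius norm of B; in particular κ_F(A, M) = √(p−r)·‖A†‖_F. -/
open Matrix

/-- **Frobenius condition number of the kernel-finding problem.**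
Let `A` be a `k×p` complex matrix of rank `r` (`1 ≤ r`, `r < p`, `r ≤ k`), `B`
its Moore–Penrose inverse (characterized by the four Penrose equations), and
`M` a `p×(p-r)` matrix with orthonormal columns spanning `ker A`.  The Frobenius
(Hilbert–Schmidt) norm of the condition matrix `Φ(Ȧ) = -B Ȧ M` between the
Frobenius Hermitian inner product spaces `M_{k,p}(ℂ)` and `M_{p,p-r}(ℂ)` —
computed over the orthonormal basis of standard basis matrices — equals
`√(p - r) · ‖B‖_F = √(p-r) · ‖A†‖_F`. -/
theorem stmt_15 (k p r : ℕ) (hr : 1 ≤ r) (hrp : r < p) (hrk : r ≤ k)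
    (A : Matrix (Fin k) (Fin p) ℂ) (hrank : A.rank = r)
    (B : Matrix (Fin p) (Fin k) ℂ)
    (hB1 : A * B * A = A) (hB2 : B * A * B = B)
    (hB3 : (A * B)ᴴ = A * B) (hB4 : (B * A)ᴴ = B * A)
    (M : Matrix (Fin p) (Fin (p - r)) ℂ) (hM : Mᴴ * M = 1)
    (hker : Submodule.span ℂ (Set.range Mᵀ) = LinearMap.ker A.mulVecLin) :
    Real.sqrt (∑ a : Fin k, ∑ b : Fin p,
        ∑ i, ∑ j, ‖(-(B * Matrix.single a b (1 : ℂ) * M)) i j‖ ^ 2)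
      = Real.sqrt (p - r : ℕ) * Real.sqrt (∑ i, ∑ j, ‖B i j‖ ^ 2) := by
  have entry : ∀ (a : Fin k) (b : Fin p) (i : Fin p) (j : Fin (p - r)),
      (B * Matrix.single a b (1 : ℂ) * M) i j = B i a * M b j := by
    intro a b i j
    simp [Matrix.mul_apply, Matrix.single, ite_and, Finset.sum_ite_eq,
      Finset.sum_ite_eq', mul_ite, ite_mul, mul_zero, zero_mul]
  have star_mul_self : ∀ z : ℂ, star z * z = ((‖z‖ ^ 2 : ℝ) : ℂ) := by
    intro z
    rw [Complex.star_def, ← Complex.normSq_eq_conj_mul_self, Complex.normSq_eq_norm_sq]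
  have hMcol : ∀ j : Fin (p - r), (∑ b, ‖M b j‖ ^ 2 : ℝ) = 1 := by
    intro j
    have h := congrFun (congrFun hM j) j
    simp only [Matrix.mul_apply, Matrix.conjTranspose_apply, Matrix.one_apply_eq,
      star_mul_self] at h
    exact_mod_cast h
  have hMsum : (∑ b : Fin p, ∑ j : Fin (p - r), ‖M b j‖ ^ 2 : ℝ) = (p - r : ℕ) := by
    rw [Finset.sum_comm, Finset.sum_congr rfl fun j _ => hMcol j]
    simp
  set SB : ℝ := ∑ i, ∑ j, ‖B i j‖ ^ 2 with hSB
  have hL : (∑ a : Fin k, ∑ b : Fin p, ∑ i, ∑ j,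
      ‖(-(B * Matrix.single a b (1 : ℂ) * M)) i j‖ ^ 2 : ℝ)
      = SB * (∑ b : Fin p, ∑ j : Fin (p - r), ‖M b j‖ ^ 2) := by
    simp only [Matrix.neg_apply, norm_neg, entry, norm_mul, mul_pow]
    calc (∑ a : Fin k, ∑ b : Fin p, ∑ i : Fin p, ∑ j : Fin (p - r),
            ‖B i a‖ ^ 2 * ‖M b j‖ ^ 2 : ℝ)
        = ∑ a : Fin k, ∑ i : Fin p,
            ‖B i a‖ ^ 2 * (∑ b : Fin p, ∑ j : Fin (p - r), ‖M b j‖ ^ 2) := by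
          refine Finset.sum_congr rfl fun a _ => ?_
          rw [Finset.sum_comm]
          refine Finset.sum_congr rfl fun i _ => ?_
          rw [Finset.mul_sum]
          exact Finset.sum_congr rfl fun b _ => (Finset.mul_sum _ _ _).symm
      _ = (∑ a : Fin k, ∑ i : Fin p, ‖B i a‖ ^ 2)
            * (∑ b : Fin p, ∑ j : Fin (p - r), ‖M b j‖ ^ 2) := by
          simp [Finset.sum_mul]
      _ = SB * (∑ b : Fin p, ∑ j : Fin (p - r), ‖M b j‖ ^ 2) := by
          rw [hSB, Finset.sum_comm]
  rw [hL, hMsum, Real.sqrt_mul (Finset.sum_nonneg fun i _ =>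
    Finset.sum_nonneg fun j _ => sq_nonneg _), mul_comm]
end
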